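/- arXiv:1410.0989 — 3 statements merged into one kernel-verified Lean document; each statement's English description precedes it below -/
import Mathlib

section
/- Let F be a probability distribution supported on a set K ⊆ ℝⁿ, and let x, x' be independent samples from F. If P(‖x - x'‖₂ < δ) ≤ η for some η ∈ (0,1) and δ > 0, then there exists a δ-packing of K of cardinality at least η^(-1/2), i.e., a finite set X ⊆ K with |X| ≥ η^(-1/2) such that any two distinct points of X are at distance at least δ. -/
open MeasureTheory Metric Set
open scoped ENNReal NNReal

lemma map_pair_pi {E : Type*} [MeasurableSpace E] (F : Measure E) [IsProbabilityMeasure F]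
    {q : ℕ} (i j : Fin q) (hij : i ≠ j) :
    (Measure.pi fun _ : Fin q => F).map (fun ω => (ω i, ω j)) = F.prod F := by
  classical
  refine (Measure.prod_eq fun s t hs ht => ?_).symm
  rw [Measure.map_apply ((measurable_pi_apply i).prodMk (measurable_pi_apply j)) (hs.prod ht)]
  have hpre : (fun ω : Fin q → E => (ω i, ω j)) ⁻¹' (s ×ˢ t)
      = Set.pi Set.univ (fun k => if k = i then s else if k = j then t else Set.univ) := by
    ext ω
    simp only [Set.mem_preimage, Set.mem_prod, Set.mem_univ_pi]
    constructor
    · rintro ⟨h1, h2⟩ k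
      by_cases hk : k = i
      · simp [hk, h1]
      · by_cases hk' : k = j
        · subst hk'; rw [if_neg hk, if_pos rfl]; exact h2
        · simp [hk, hk']
    · intro h
      have h1 := h i
      have h2 := h j
      simp only [if_pos rfl] at h1
      rw [if_neg (Ne.symm hij), if_pos rfl] at h2
      exact ⟨h1, h2⟩
  rw [hpre, Measure.pi_pi]
  rw [Finset.prod_eq_mul i j hij
    (fun c _ hc => by simp [hc.1, hc.2])
    (fun h => absurd (Finset.mem_univ i) h)
    (fun h => absurd (Finset.mem_univ j) h)]
  simp [Ne.symm hij]

/-- Random packing lemma: if two independent samples from a distribution `F`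
supported on `K` are at distance less than `δ` with probability at most `η`, then `K`
contains a `δ`-packing of cardinality at least `η^(-1/2)`. -/
theorem stmt0 (n : ℕ) (K : Set (EuclideanSpace ℝ (Fin n)))
    (F : Measure (EuclideanSpace ℝ (Fin n))) [IsProbabilityMeasure F]
    (hsupp : ∀ᵐ x ∂F, x ∈ K)
    (δ η : ℝ) (hδ : 0 < δ) (hη0 : 0 < η) (hη1 : η < 1)
    (hprob : F.prod F {p | ‖p.1 - p.2‖ < δ} ≤ ENNReal.ofReal η) :
    ∃ X : Finset (EuclideanSpace ℝ (Fin n)), ↑X ⊆ K ∧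
      η ^ (-(1 : ℝ) / 2) ≤ (X.card : ℝ) ∧
      ∀ x ∈ X, ∀ y ∈ X, x ≠ y → δ ≤ ‖x - y‖ := by
  classical
  set s : ℝ := Real.sqrt η with hs_def
  have hs0 : 0 < s := Real.sqrt_pos.2 hη0
  have hs1 : s < 1 := by
    rw [hs_def, show (1:ℝ) = Real.sqrt 1 by simp]
    exact Real.sqrt_lt_sqrt hη0.le hη1
  have hss : s * s = η := Real.mul_self_sqrt hη0.le
  set r : ℝ := η ^ (-(1 : ℝ) / 2) with hr_def
  have hr_eq : r = s⁻¹ := by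
    rw [hr_def, hs_def, show (-(1:ℝ)/2) = -(1/2) by ring, Real.rpow_neg hη0.le,
      Real.sqrt_eq_rpow]
  have hr0 : 0 < r := by rw [hr_eq]; positivity
  set q : ℕ := ⌈r⌉₊ with hq_def
  have hq0 : 0 < q := Nat.ceil_pos.2 hr0
  have hrq : r ≤ (q : ℝ) := Nat.le_ceil r
  have hq1 : (q : ℝ) < r + 1 := Nat.ceil_lt_add_one hr0.le
  set μ : Measure (Fin q → EuclideanSpace ℝ (Fin n)) := Measure.pi fun _ => F with hμ_def
  have hB : MeasurableSet {p : EuclideanSpace ℝ (Fin n) × EuclideanSpace ℝ (Fin n) | ‖p.1 - p.2‖ < δ} :=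
    (isOpen_lt ((continuous_fst.sub continuous_snd).norm) continuous_const).measurableSet
  -- per-pair bound
  have hpair : ∀ i j : Fin q, i ≠ j →
      μ {ω : Fin q → EuclideanSpace ℝ (Fin n) | ‖ω i - ω j‖ < δ} ≤ ENNReal.ofReal η := by
    intro i j hij
    have hmeas : Measurable fun ω : Fin q → EuclideanSpace ℝ (Fin n) => (ω i, ω j) :=
      (measurable_pi_apply i).prodMk (measurable_pi_apply j)
    have hset : {ω : Fin q → EuclideanSpace ℝ (Fin n) | ‖ω i - ω j‖ < δ}
        = (fun ω : Fin q → EuclideanSpace ℝ (Fin n) => (ω i, ω j)) ⁻¹' {p : EuclideanSpace ℝ (Fin n) × EuclideanSpace ℝ (Fin n) | ‖p.1 - p.2‖ < δ} := rfl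
    rw [hset, ← Measure.map_apply hmeas hB, map_pair_pi F i j hij]
    exact hprob
  -- the bad event
  set bad : Set (Fin q → EuclideanSpace ℝ (Fin n)) :=
    ⋃ j : Fin q, ⋃ i ∈ Finset.Iio j, {ω : Fin q → EuclideanSpace ℝ (Fin n) | ‖ω i - ω j‖ < δ} with hbad_def
  set m : ℕ := ∑ j : Fin q, (j : ℕ) with hm_def
  have hbad_le : μ bad ≤ (m : ℝ≥0∞) * ENNReal.ofReal η := by
    calc μ bad ≤ ∑ j : Fin q, μ (⋃ i ∈ Finset.Iio j, {ω : Fin q → EuclideanSpace ℝ (Fin n) | ‖ω i - ω j‖ < δ}) :=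
          measure_iUnion_fintype_le _ _
      _ ≤ ∑ j : Fin q, ∑ i ∈ Finset.Iio j, μ {ω : Fin q → EuclideanSpace ℝ (Fin n) | ‖ω i - ω j‖ < δ} :=
          Finset.sum_le_sum fun j _ => measure_biUnion_finset_le _ _
      _ ≤ ∑ j : Fin q, ∑ _i ∈ Finset.Iio j, ENNReal.ofReal η :=
          Finset.sum_le_sum fun j _ => Finset.sum_le_sum fun i hi =>
            hpair i j (Fin.ne_of_lt (Finset.mem_Iio.1 hi))
      _ = ∑ j : Fin q, ((j : ℕ) : ℝ≥0∞) * ENNReal.ofReal η := by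
          simp [Fin.card_Iio, mul_comm]
      _ = (m : ℝ≥0∞) * ENNReal.ofReal η := by
          rw [← Finset.sum_mul, hm_def, Nat.cast_sum]
  -- numeric bound : m * η < 1
  have h2m : ((2 * m : ℕ) : ℝ) = (q : ℝ) * ((q : ℝ) - 1) := by
    have hsum : ∑ j : Fin q, (j : ℕ) = ∑ i ∈ Finset.range q, i :=
      Fin.sum_univ_eq_sum_range (fun i => i) q
    have h := Finset.sum_range_id_mul_two q
    have hm2 : 2 * m = q * (q - 1) := by omega
    rw [hm2, Nat.cast_mul, Nat.cast_sub hq0, Nat.cast_one]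
  have hkey : (m : ℝ) * η < 1 := by
    have hprod : (q : ℝ) * ((q : ℝ) - 1) < (r + 1) * r := by
      nlinarith [mul_pos (show (0:ℝ) < r + 1 - (q:ℝ) by linarith)
        (show (0:ℝ) < r + (q:ℝ) by positivity)]
    have hrr : r * r * η = 1 := by
      rw [hr_eq]; field_simp; nlinarith [hss]
    have hre : r * η = s := by
      rw [hr_eq]; field_simp; nlinarith [hss]
    have : ((2 * m : ℕ) : ℝ) * η < (r + 1) * r * η := by
      rw [h2m]
      exact mul_lt_mul_of_pos_right hprod hη0
    have h2 : 2 * ((m:ℝ) * η) < 1 + s := by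
      push_cast at this
      nlinarith [hrr, hre]
    linarith
  have hbad_lt : μ bad < 1 := by
    refine lt_of_le_of_lt hbad_le ?_
    calc (m : ℝ≥0∞) * ENNReal.ofReal η = ENNReal.ofReal ((m : ℝ) * η) := by
          rw [ENNReal.ofReal_mul (by positivity), ENNReal.ofReal_natCast]
      _ < 1 := ENNReal.ofReal_lt_one.2 hkey
  -- the good event
  have hKall : ∀ᵐ ω ∂μ, ∀ i, ω i ∈ K :=
    ae_all_iff.2 fun i => Measure.tendsto_eval_ae_ae (by simpa using hsupp : K ∈ ae F)
  have hnull : μ {ω : Fin q → EuclideanSpace ℝ (Fin n) | ¬ ∀ i, ω i ∈ K} = 0 := hKall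
  -- find a good point
  have hne : ((bad ∪ {ω : Fin q → EuclideanSpace ℝ (Fin n) | ¬ ∀ i, ω i ∈ K})ᶜ).Nonempty := by
    by_contra h
    rw [Set.not_nonempty_iff_eq_empty, Set.compl_empty_iff] at h
    have : (1 : ℝ≥0∞) = μ Set.univ := (measure_univ).symm
    have hle : μ Set.univ ≤ μ bad + μ {ω : Fin q → EuclideanSpace ℝ (Fin n) | ¬ ∀ i, ω i ∈ K} := by
      rw [← h]; exact measure_union_le _ _
    rw [hnull, add_zero] at hle
    exact absurd (lt_of_le_of_lt (this ▸ hle) hbad_lt) (lt_irrefl _)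
  obtain ⟨ω, hω⟩ := hne
  simp only [Set.mem_compl_iff, Set.mem_union, not_or, Set.mem_setOf_eq, not_not] at hω
  obtain ⟨hωbad, hωK⟩ := hω
  have hsep : ∀ i j : Fin q, i ≠ j → δ ≤ ‖ω i - ω j‖ := by
    have hb : ∀ j : Fin q, ∀ i ∈ Finset.Iio j, ¬ ‖ω i - ω j‖ < δ := by
      intro j i hi hlt
      exact hωbad (Set.mem_iUnion.2 ⟨j, Set.mem_iUnion₂.2 ⟨i, hi, hlt⟩⟩)
    intro i j hij
    rcases lt_or_gt_of_ne hij with h | h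
    · exact not_lt.1 (hb j i (Finset.mem_Iio.2 h))
    · rw [norm_sub_rev]
      exact not_lt.1 (hb i j (Finset.mem_Iio.2 h))
  have hinj : Function.Injective ω := by
    intro i j hij
    by_contra h
    have := hsep i j h
    rw [hij, sub_self, norm_zero] at this
    linarith
  refine ⟨Finset.univ.image ω, ?_, ?_, ?_⟩
  · intro x hx
    simp only [Finset.coe_image, Finset.coe_univ, Set.image_univ, Set.mem_range] at hx
    obtain ⟨i, rfl⟩ := hx
    exact hωK i
  · rw [Finset.card_image_of_injective _ hinj, Finset.card_univ, Fintype.card_fin]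
    exact hrq
  · intro x hx y hy hxy
    simp only [Finset.mem_image, Finset.mem_univ, true_and] at hx hy
    obtain ⟨i, rfl⟩ := hx
    obtain ⟨j, rfl⟩ := hy
    exact hsep i j (fun h => hxy (by rw [h]))
end

section
/- Let d ≥ 64 be a perfect square, let Ω be the 2D horizontal-and-vertical finite differences operator on √d × √d images (with cyclic indexing), and let K₂ be the union of all 2-dimensional subspaces K_T = {x : Ω_{T^c} x = 0} over supports T with dim(K_T) = 2. Then the packing number of K₂ ∩ S^{d-1} at scale 1/2 satisfies P(K₂ ∩ S^{d-1}, 1/2) ≥ exp(d/64). -/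
open MeasureTheory ProbabilityTheory Metric Set
open scoped ENNReal NNReal

/-- One row of the cyclic 2D finite differences operator. -/
noncomputable def omegaDiff {n : ℕ} [NeZero n] (t : (Fin n × Fin n) ⊕ (Fin n × Fin n))
    (x : EuclideanSpace ℝ (Fin n × Fin n)) : ℝ :=
  match t with
  | .inl (i, j) => x (i, j) - x (i, j + 1)
  | .inr (i, j) => x (i, j) - x (i + 1, j)

/-- The subspace of signals orthogonal to rows outside T. -/
noncomputable def KT {n : ℕ} [NeZero n] (T : Set ((Fin n × Fin n) ⊕ (Fin n × Fin n))) :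
    Submodule ℝ (EuclideanSpace ℝ (Fin n × Fin n)) where
  carrier := {x | ∀ t, t ∉ T → omegaDiff t x = 0}
  add_mem' := by
    intro a b ha hb t ht
    have h1 := ha t ht; have h2 := hb t ht
    rcases t with ⟨i, j⟩ | ⟨i, j⟩ <;>
      simp only [omegaDiff, PiLp.add_apply] at h1 h2 ⊢ <;> linarith
  zero_mem' := by
    intro t ht
    rcases t with ⟨i, j⟩ | ⟨i, j⟩ <;> simp [omegaDiff]
  smul_mem' := by
    intro c a ha t ht
    have h1 := ha t ht
    rcases t with ⟨i, j⟩ | ⟨i, j⟩ <;>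
      simp only [omegaDiff, PiLp.smul_apply, smul_eq_mul] at h1 ⊢ <;> linear_combination c * h1

/-- The union of the 2-dimensional subspaces `K_T` for the 2D finite differences operator. -/
noncomputable def Ktwo (n : ℕ) [NeZero n] : Set (EuclideanSpace ℝ (Fin n × Fin n)) :=
  ⋃ T ∈ {T : Set ((Fin n × Fin n) ⊕ (Fin n × Fin n)) | Module.finrank ℝ (KT T) = 2},
    (KT T : Set (EuclideanSpace ℝ (Fin n × Fin n)))

namespace Pf
open Finset
open Fin.NatCast
set_option linter.unusedSectionVars false


/-- tail bound: `∑_{j≤m} C(N,j) * 3^(N-m) ≤ 4^N`. -/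
lemma sum3 (N m : ℕ) (hm : m ≤ N) :
    (∑ j ∈ range (m+1), N.choose j) * 3^(N-m) ≤ 4^N := by
  rw [Finset.sum_mul]
  have h2 : ∑ j ∈ range (m+1), N.choose j * 3^(N-m)
      ≤ ∑ j ∈ range (m+1), N.choose j * 3^(N-j) := by
    apply Finset.sum_le_sum
    intro j hj
    have hj' : j ≤ m := by simpa [Nat.lt_succ_iff] using hj
    exact Nat.mul_le_mul_left _ (Nat.pow_le_pow_right (by norm_num) (by omega))
  refine h2.trans ?_
  have h3 : ∑ j ∈ range (m+1), N.choose j * 3^(N-j)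
      ≤ ∑ j ∈ range (N+1), N.choose j * 3^(N-j) := by
    apply Finset.sum_le_sum_of_subset
    exact Finset.range_subset_range.mpr (by omega)
  refine h3.trans (le_of_eq ?_)
  have h4 : (4:ℕ)^N = (1+3)^N := by norm_num
  rw [h4, add_pow]
  apply Finset.sum_congr rfl
  intro j hj
  simp [one_pow, mul_comm]

/-- middle binomial lower bound. -/
lemma middle (N : ℕ) : 2^N ≤ (N+1) * N.choose (N/2) := by
  have h := Nat.sum_range_choose N
  calc 2^N = ∑ i ∈ range (N+1), N.choose i := h.symm
    _ ≤ ∑ _i ∈ range (N+1), N.choose (N/2) := by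
        apply Finset.sum_le_sum; intro i _; exact Nat.choose_le_middle i N
    _ = (N+1) * N.choose (N/2) := by simp [mul_comm]

/-- geometric tail bound. -/
lemma sum_le_geom (N : ℕ) : ∀ m, 2*m ≤ N →
    (N - 2*m + 1) * (∑ j ∈ range (m+1), N.choose j) ≤ (N - m + 1) * N.choose m := by
  intro m
  induction m with
  | zero => intro _; simp
  | succ m ih =>
    intro h
    have ihm := ih (by omega)
    -- key : (N - 2m - 1) * Σ_{≤m} ≤ (N - m) * C(N,m)
    have cross : (N - 2*m - 1) * (N - m + 1) ≤ (N - m) * (N - 2*m + 1) := by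
      have e1 : N - m = (N - 2*m - 1) + (m+1) := by omega
      have e2 : N - 2*m + 1 = (N - 2*m - 1) + 2 := by omega
      have e3 : N - m + 1 = (N - 2*m - 1) + (m+2) := by omega
      rw [e1, e2]
      generalize (N - 2*m - 1) = x
      nlinarith [Nat.zero_le x]
    have key : (N - 2*m+1) * ((N - 2*m - 1) * (∑ j ∈ range (m+1), N.choose j))
        ≤ (N - 2*m+1) * ((N - m) * N.choose m) := by
      calc (N - 2*m+1) * ((N - 2*m - 1) * (∑ j ∈ range (m+1), N.choose j))
          = (N - 2*m - 1) * ((N - 2*m+1) * (∑ j ∈ range (m+1), N.choose j)) := by ring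
        _ ≤ (N - 2*m - 1) * ((N - m + 1) * N.choose m) := Nat.mul_le_mul_left _ ihm
        _ = ((N - 2*m - 1) * (N - m + 1)) * N.choose m := by ring
        _ ≤ ((N - m) * (N - 2*m+1)) * N.choose m := Nat.mul_le_mul_right _ cross
        _ = (N - 2*m+1) * ((N - m) * N.choose m) := by ring
    have key2 : (N - 2*m - 1) * (∑ j ∈ range (m+1), N.choose j) ≤ (N - m) * N.choose m :=
      Nat.le_of_mul_le_mul_left key (by omega)
    have hc : (m+1) * N.choose (m+1) = (N - m) * N.choose m := by
      rw [mul_comm (m+1), Nat.choose_succ_right_eq, mul_comm]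
    have hsum : ∑ j ∈ range (m+2), N.choose j = (∑ j ∈ range (m+1), N.choose j) + N.choose (m+1) := by
      rw [Finset.sum_range_succ]
    rw [hsum]
    have e1 : N - 2*(m+1) + 1 = N - 2*m - 1 := by omega
    have e2 : N - (m+1) + 1 = N - m := by omega
    rw [e1, e2]
    calc (N - 2*m - 1) * ((∑ j ∈ range (m+1), N.choose j) + N.choose (m+1))
        = (N - 2*m - 1) * (∑ j ∈ range (m+1), N.choose j) + (N - 2*m - 1) * N.choose (m+1) := by ring
      _ ≤ (N - m) * N.choose m + (N - 2*m - 1) * N.choose (m+1) := by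
          exact Nat.add_le_add_right key2 _
      _ = (m+1) * N.choose (m+1) + (N - 2*m - 1) * N.choose (m+1) := by rw [hc]
      _ = ((m+1) + (N - 2*m-1)) * N.choose (m+1) := by ring
      _ ≤ (N - m) * N.choose (m+1) := by
          apply Nat.mul_le_mul_right
          omega



variable {I : Type*} [Fintype I] [DecidableEq I]

/-- ball cardinality bound in the Hamming cube. -/
lemma ball_card (a : I → Bool) (m : ℕ) :
    ((univ : Finset (I → Bool)).filter fun y => hammingDist a y ≤ m).card
      ≤ ∑ j ∈ range (m+1), (Fintype.card I).choose j := by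
  classical
  have hinj : Set.InjOn (fun y : I → Bool => univ.filter fun i => a i ≠ y i)
      ((univ : Finset (I → Bool)).filter fun y => hammingDist a y ≤ m) := by
    intro y1 h1 y2 h2 he
    have he' : (univ.filter fun i => a i ≠ y1 i) = univ.filter fun i => a i ≠ y2 i := he
    funext i
    by_cases hi : a i ≠ y1 i
    · have hi1 : i ∈ univ.filter fun i => a i ≠ y1 i := by simp [hi]
      rw [he'] at hi1
      have hi2 : a i ≠ y2 i := by simpa using hi1
      revert hi hi2; cases a i <;> cases y1 i <;> cases y2 i <;> simp
    · have hi1 : i ∉ univ.filter fun i => a i ≠ y1 i := by simp; simpa using hi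
      rw [he'] at hi1
      have hi2 : ¬ a i ≠ y2 i := by simpa using hi1
      revert hi hi2; cases a i <;> cases y1 i <;> cases y2 i <;> simp
  have hmaps : ∀ y ∈ (univ : Finset (I → Bool)).filter fun y => hammingDist a y ≤ m,
      (univ.filter fun i => a i ≠ y i) ∈ (range (m+1)).biUnion
        (fun j => Finset.powersetCard j (univ : Finset I)) := by
    intro y hy
    simp only [Finset.mem_filter, Finset.mem_univ, true_and] at hy
    simp only [Finset.mem_biUnion, Finset.mem_range, Finset.mem_powersetCard]
    refine ⟨hammingDist a y, by omega, by simp, ?_⟩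
    rfl
  have := Finset.card_le_card_of_injOn _ hmaps hinj
  refine this.trans ?_
  refine (Finset.card_biUnion_le).trans ?_
  apply Finset.sum_le_sum
  intro j _
  simp [Finset.card_powersetCard]

/-- greedy packing. -/
lemma greedy (D V : ℕ) (hD : 0 < D) :
    ∀ (A : Finset (I → Bool)),
    (∀ a ∈ A, (A.filter fun y => hammingDist a y < D).card ≤ V) →
    ∃ C : Finset (I → Bool), C ⊆ A ∧
      (∀ x ∈ C, ∀ y ∈ C, x ≠ y → D ≤ hammingDist x y) ∧ A.card ≤ C.card * V := by
  intro A
  induction A using Finset.strongInduction with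
  | _ A ih =>
    intro hV
    rcases A.eq_empty_or_nonempty with rfl | ⟨a, ha⟩
    · exact ⟨∅, by simp⟩
    · set A' := A.filter fun y => ¬ hammingDist a y < D with hA'
      have hsub : A' ⊆ A := Finset.filter_subset _ _
      have hanot : a ∉ A' := by
        intro hc
        exact (Finset.mem_filter.mp hc).2 (by simpa [hammingDist_self] using hD)
      have hss : A' ⊂ A := Finset.ssubset_iff_of_subset hsub |>.mpr ⟨a, ha, hanot⟩
      obtain ⟨C', hC'sub, hC'pair, hC'card⟩ := ih A' hss (fun b hb =>
        (Finset.card_le_card (Finset.filter_subset_filter _ hsub)).trans (hV b (hsub hb)))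
      have hanotC : a ∉ C' := fun hc => hanot (hC'sub hc)
      refine ⟨insert a C', ?_, ?_, ?_⟩
      · intro x hx
        rcases Finset.mem_insert.mp hx with rfl | hx
        · exact ha
        · exact hsub (hC'sub hx)
      · intro x hx y hy hxy
        rcases Finset.mem_insert.mp hx with hxa | hx' <;>
          rcases Finset.mem_insert.mp hy with hya | hy'
        · exact absurd (hxa.trans hya.symm) hxy
        · subst hxa
          have h2 := (Finset.mem_filter.mp (hC'sub hy')).2
          omega
        · subst hya
          have h2 := (Finset.mem_filter.mp (hC'sub hx')).2
          rw [hammingDist_comm]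
          omega
        · exact hC'pair x hx' y hy' hxy
      · rw [Finset.card_insert_of_notMem hanotC]
        have hsplit : A.card = A'.card + (A.filter fun y => hammingDist a y < D).card := by
          rw [hA', add_comm]
          exact (Finset.card_filter_add_card_filter_not _).symm
        calc A.card = A'.card + (A.filter fun y => hammingDist a y < D).card := hsplit
          _ ≤ C'.card * V + V := Nat.add_le_add hC'card (hV a ha)
          _ = (C'.card + 1) * V := by ring

/-- weight of a Boolean vector -/
def wt (b : I → Bool) : ℕ := (univ.filter fun v => b v = true).card

lemma slice_card (w : ℕ) :
    ((univ : Finset (I → Bool)).filter fun b => wt b = w).card = (Fintype.card I).choose w := by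
  classical
  rw [← Finset.card_univ, ← Finset.card_powersetCard w (univ : Finset I)]
  apply Finset.card_bij (fun b _ => univ.filter fun v => b v = true)
  · intro b hb
    simp only [Finset.mem_filter, Finset.mem_univ, true_and] at hb
    simp only [Finset.mem_powersetCard]
    exact ⟨Finset.subset_univ _, hb⟩
  · intro b1 h1 b2 h2 he
    have he' : (univ.filter fun v => b1 v = true) = univ.filter fun v => b2 v = true := he
    funext v
    by_cases hv : b1 v = true
    · have : v ∈ univ.filter fun v => b1 v = true := by simp [hv]
      rw [he'] at this
      simp at this
      rw [hv, this]
    · have : v ∉ univ.filter fun v => b1 v = true := by simp [hv]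
      rw [he'] at this
      simp at this
      revert hv this; cases b1 v <;> cases b2 v <;> simp
  · intro s hs
    refine ⟨fun v => v ∈ s, ?_, ?_⟩
    · simp only [Finset.mem_filter, Finset.mem_univ, true_and]
      simp only [Finset.mem_powersetCard] at hs
      rw [← hs.2, wt]
      simp [Finset.filter_mem_eq_inter]
    · ext v
      simp

/-- distance between same-weight vectors: `hammingDist b b' = 2*(w - c)`. -/
lemma dist_eq (b b' : I → Bool) (w : ℕ) (hb : wt b = w) (hb' : wt b' = w) :
    hammingDist b b' =
      2 * (w - ((univ.filter fun v => b v = true) ∩ (univ.filter fun v => b' v = true)).card)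
    ∧ ((univ.filter fun v => b v = true) ∩ (univ.filter fun v => b' v = true)).card ≤ w := by
  classical
  set s := univ.filter fun v => b v = true with hs
  set t := univ.filter fun v => b' v = true with ht
  have hsw : s.card = w := hb
  have htw : t.card = w := hb'
  have hcap : (s ∩ t).card ≤ w :=
    le_trans (Finset.card_le_card Finset.inter_subset_left) (le_of_eq hsw)
  have hd : (univ.filter fun i => b i ≠ b' i) = (s \ t) ∪ (t \ s) := by
    ext v
    simp only [Finset.mem_filter, Finset.mem_univ, true_and, Finset.mem_union, Finset.mem_sdiff, hs, ht]
    cases hbv : b v <;> cases hbv' : b' v <;> simp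
  have hdisj : Disjoint (s \ t) (t \ s) := disjoint_sdiff_sdiff
  have h1' := Finset.card_sdiff_add_card_inter s t
  have h2' := Finset.card_sdiff_add_card_inter t s
  rw [Finset.inter_comm] at h2'
  constructor
  · show (univ.filter fun i => b i ≠ b' i).card = _
    rw [hd, Finset.card_union_of_disjoint hdisj]
    omega
  · exact hcap



variable {n : ℕ} [NeZero n]

/-- endpoints of an edge -/
def e1 : (Fin n × Fin n) ⊕ (Fin n × Fin n) → Fin n × Fin n
  | .inl (i, j) => (i, j)
  | .inr (i, j) => (i, j)

def e2 : (Fin n × Fin n) ⊕ (Fin n × Fin n) → Fin n × Fin n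
  | .inl (i, j) => (i, j + 1)
  | .inr (i, j) => (i + 1, j)

/-- the cut set of a predicate -/
def Tpred (pred : Fin n × Fin n → Prop) : Set ((Fin n × Fin n) ⊕ (Fin n × Fin n)) :=
  {t | ¬ (pred (e1 t) ↔ pred (e2 t))}

/-- two-valued indicator vector -/
noncomputable def indic (pred : Fin n × Fin n → Prop) [DecidablePred pred] (a c : ℝ) :
    EuclideanSpace ℝ (Fin n × Fin n) :=
  WithLp.toLp 2 (fun p => if pred p then a else c)

lemma indic_mem_KT (pred : Fin n × Fin n → Prop) [DecidablePred pred] (a c : ℝ) :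
    indic pred a c ∈ KT (Tpred pred) := by
  intro t ht
  have h : pred (e1 t) ↔ pred (e2 t) := not_not.mp ht
  rcases t with ⟨i, j⟩ | ⟨i, j⟩ <;>
  · simp only [e1, e2] at h
    simp only [omegaDiff, indic, PiLp.toLp_apply]
    rw [if_congr h rfl rfl, sub_self]

/-- the horizontal step property -/
lemma stepH {pred : Fin n × Fin n → Prop} {y : EuclideanSpace ℝ (Fin n × Fin n)}
    (hy : y ∈ KT (Tpred pred)) (i j : Fin n) (h : pred (i, j) ↔ pred (i, j + 1)) :
    y (i, j) = y (i, j + 1) := by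
  have := hy (.inl (i, j)) (by simp only [Tpred, Set.mem_setOf_eq, e1, e2, not_not]; exact h)
  simp only [omegaDiff] at this
  linarith

lemma stepV {pred : Fin n × Fin n → Prop} {y : EuclideanSpace ℝ (Fin n × Fin n)}
    (hy : y ∈ KT (Tpred pred)) (i j : Fin n) (h : pred (i, j) ↔ pred (i + 1, j)) :
    y (i, j) = y (i + 1, j) := by
  have := hy (.inr (i, j)) (by simp only [Tpred, Set.mem_setOf_eq, e1, e2, not_not]; exact h)
  simp only [omegaDiff] at this
  linarith

/-- if a predicate's 2 classes are each "connected", `KT (Tpred pred)` has rank 2. -/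
lemma finrank_KT_two (pred : Fin n × Fin n → Prop) [DecidablePred pred]
    (p₀ q₀ : Fin n × Fin n) (hp : pred p₀) (hq : ¬ pred q₀)
    (hconn : ∀ y : EuclideanSpace ℝ (Fin n × Fin n), y ∈ KT (Tpred pred) →
      (∀ p, pred p → y p = y p₀) ∧ (∀ p, ¬ pred p → y p = y q₀)) :
    Module.finrank ℝ (KT (Tpred pred)) = 2 := by
  classical
  let Φ : (ℝ × ℝ) →ₗ[ℝ] KT (Tpred pred) :=
    { toFun := fun ac => ⟨indic pred ac.1 ac.2, indic_mem_KT pred ac.1 ac.2⟩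
      map_add' := by
        intro u v
        apply Subtype.ext
        ext p
        show indic pred (u.1 + v.1) (u.2 + v.2) p
          = (⟨indic pred u.1 u.2, _⟩ + ⟨indic pred v.1 v.2, _⟩ :
              KT (Tpred pred)).val p
        rw [Submodule.coe_add]
        show _ = indic pred u.1 u.2 p + indic pred v.1 v.2 p
        by_cases h : pred p <;> simp [indic, h]
      map_smul' := by
        intro c u
        apply Subtype.ext
        ext p
        show indic pred (c * u.1) (c * u.2) p
          = (c • (⟨indic pred u.1 u.2, _⟩ : KT (Tpred pred))).val p
        rw [Submodule.coe_smul]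
        show _ = c • indic pred u.1 u.2 p
        by_cases h : pred p <;> simp [indic, h] }
  have hbij : Function.Bijective Φ := by
    constructor
    · intro u v huv
      have h1 : indic pred u.1 u.2 = indic pred v.1 v.2 := congrArg Subtype.val huv
      have hp1 := congrFun (congrArg WithLp.ofLp h1) p₀
      have hq1 := congrFun (congrArg WithLp.ofLp h1) q₀
      simp only [indic, PiLp.toLp_apply, if_pos hp, if_neg hq] at hp1 hq1
      exact Prod.ext hp1 hq1
    · rintro ⟨y, hy⟩
      obtain ⟨hS, hC⟩ := hconn y hy
      refine ⟨(y p₀, y q₀), ?_⟩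
      apply Subtype.ext
      ext p
      show indic pred (y p₀) (y q₀) p = y p
      by_cases h : pred p
      · rw [indic, PiLp.toLp_apply, if_pos h, hS p h]
      · rw [indic, PiLp.toLp_apply, if_neg h, hC p h]
  have := (LinearEquiv.ofBijective Φ hbij).finrank_eq
  rw [← this]
  simp [Module.finrank_prod]

lemma indic_mem_Ktwo (pred : Fin n × Fin n → Prop) [DecidablePred pred]
    (p₀ q₀ : Fin n × Fin n) (hp : pred p₀) (hq : ¬ pred q₀)
    (hconn : ∀ y : EuclideanSpace ℝ (Fin n × Fin n), y ∈ KT (Tpred pred) →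
      (∀ p, pred p → y p = y p₀) ∧ (∀ p, ¬ pred p → y p = y q₀))
    (a c : ℝ) : indic pred a c ∈ Ktwo n := by
  have h2 := finrank_KT_two pred p₀ q₀ hp hq hconn
  simp only [Ktwo, Set.mem_iUnion]
  exact ⟨Tpred pred, h2, indic_mem_KT pred a c⟩


section Single

variable {n : ℕ} [NeZero n]

/-- offset cell -/
def sp (p : Fin n × Fin n) (a b : ℕ) : Fin n × Fin n := (p.1 + (a : Fin n), p.2 + (b : Fin n))

lemma cast_eq_zero_iff (a : ℕ) (ha : a < n) : (a : Fin n) = 0 ↔ a = 0 := by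
  constructor
  · intro h
    have := congrArg Fin.val h
    rw [Fin.val_natCast] at this
    simpa [Nat.mod_eq_of_lt ha] using this
  · rintro rfl; simp

lemma cast_add_one' (a : ℕ) : ((a : Fin n)) + 1 = ((a + 1 : ℕ) : Fin n) := by push_cast; ring

lemma sp_eq_iff (p : Fin n × Fin n) (a b : ℕ) (ha : a < n) (hb : b < n) :
    sp p a b = p ↔ (a = 0 ∧ b = 0) := by
  rw [sp, Prod.ext_iff]
  simp only [add_eq_left]
  rw [cast_eq_zero_iff a ha, cast_eq_zero_iff b hb]

lemma conn_single (hn : 2 ≤ n) (p : Fin n × Fin n)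
    (y : EuclideanSpace ℝ (Fin n × Fin n)) (hy : y ∈ KT (Tpred (· = p))) :
    ∀ q, q ≠ p → y q = y (sp p 1 0) := by
  have eqV : ∀ a b : ℕ, a + 1 < n → b < n → ¬(a = 0 ∧ b = 0) →
      y (sp p a b) = y (sp p (a+1) b) := by
    intro a b ha hb hab
    have h1 : ¬ (sp p a b = p) := by
      rw [sp_eq_iff p a b (by omega) hb]; exact hab
    have h2 : ¬ (sp p (a+1) b = p) := by
      rw [sp_eq_iff p (a+1) b ha hb]; omega
    have := stepV (pred := (· = p)) hy (p.1 + (a : Fin n)) (p.2 + (b : Fin n)) (by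
      constructor
      · intro hc; exact absurd hc h1
      · intro hc
        exfalso; apply h2
        rw [sp, ← cast_add_one', ← add_assoc]
        exact hc)
    rw [sp, sp, ← cast_add_one', ← add_assoc]
    exact this
  have eqH : ∀ a b : ℕ, a < n → b + 1 < n → ¬(a = 0 ∧ b = 0) →
      y (sp p a b) = y (sp p a (b+1)) := by
    intro a b ha hb hab
    have h1 : ¬ (sp p a b = p) := by
      rw [sp_eq_iff p a b ha (by omega)]; exact hab
    have h2 : ¬ (sp p a (b+1) = p) := by
      rw [sp_eq_iff p a (b+1) ha hb]; omega
    have := stepH (pred := (· = p)) hy (p.1 + (a : Fin n)) (p.2 + (b : Fin n)) (by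
      constructor
      · intro hc; exact absurd hc h1
      · intro hc
        exfalso; apply h2
        rw [sp, ← cast_add_one', ← add_assoc]
        exact hc)
    rw [sp, sp, ← cast_add_one', ← add_assoc]
    exact this
  -- wrap-around edge for rows/columns: use only forward steps below n
  have L1 : ∀ a : ℕ, 1 ≤ a → a < n → y (sp p a 0) = y (sp p 1 0) := by
    intro a
    induction a with
    | zero => omega
    | succ a ih =>
      intro _ ha
      by_cases h1 : a = 0
      · subst h1; rfl
      · have := eqV a 0 ha (by omega) (by omega)
        rw [← this]
        exact ih (by omega) (by omega)
  have L2 : ∀ a : ℕ, 1 ≤ a → a < n → ∀ b : ℕ, b < n → y (sp p a b) = y (sp p a 0) := by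
    intro a ha1 ha2 b
    induction b with
    | zero => intro _; rfl
    | succ b ih =>
      intro hb
      have := eqH a b ha2 hb (by omega)
      rw [← this]
      exact ih (by omega)
  have L3 : ∀ b : ℕ, 1 ≤ b → b < n → y (sp p 0 b) = y (sp p 1 b) := by
    intro b hb1 hb2
    exact eqV 0 b (by omega) hb2 (by omega)
  intro q hq
  set a := (q.1 - p.1).val with hadef
  set b := (q.2 - p.2).val with hbdef
  have ha : a < n := (q.1 - p.1).isLt
  have hb : b < n := (q.2 - p.2).isLt
  have hq1 : sp p a b = q := by
    rw [sp, hadef, hbdef, Fin.cast_val_eq_self, Fin.cast_val_eq_self]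
    have e1 : p.1 + (q.1 - p.1) = q.1 := by abel
    have e2 : p.2 + (q.2 - p.2) = q.2 := by abel
    rw [e1, e2]
  have hab : ¬ (a = 0 ∧ b = 0) := by
    intro hc
    apply hq
    rw [← hq1]
    rw [sp_eq_iff p a b ha hb]
    exact hc
  rw [← hq1]
  rcases Nat.eq_zero_or_pos a with ha0 | ha1
  · have hb1 : 1 ≤ b := by omega
    rw [ha0, L3 b hb1 hb]
    rw [L2 1 (by omega) (by omega) b hb]
  · rw [L2 a ha1 ha b hb]
    exact L1 a ha1 ha

lemma single_conn_package (hn : 2 ≤ n) (p : Fin n × Fin n) :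
    ∀ y : EuclideanSpace ℝ (Fin n × Fin n), y ∈ KT (Tpred (· = p)) →
      (∀ q, q = p → y q = y p) ∧ (∀ q, ¬ q = p → y q = y (sp p 1 0)) := by
  intro y hy
  constructor
  · intro q hq; rw [hq]
  · exact conn_single hn p y hy

lemma sp10_ne (hn : 2 ≤ n) (p : Fin n × Fin n) : ¬ (sp p 1 0 = p) := by
  rw [sp_eq_iff p 1 0 (by omega) (by omega)]
  omega

end Single

section Comb

variable {n : ℕ} [NeZero n]

/-- extended bit lookup -/
def bext (b : Fin (n/4) × Fin (n-2) → Bool) (r t : ℕ) : Bool :=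
  if h : r < n/4 ∧ t < n-2 then b (⟨r, h.1⟩, ⟨t, h.2⟩) else false

/-- the comb predicate on natural coordinates -/
def PN (b : Fin (n/4) × Fin (n-2) → Bool) (i j : ℕ) : Prop :=
  j = 0 ∨
  (i % 4 = 0 ∧ i < 4*(n/4) ∧ 1 ≤ j ∧ j ≤ n-2) ∨
  ((i % 4 = 1 ∨ i % 4 = 2) ∧ i < 4*(n/4) ∧ 1 ≤ j ∧ j ≤ n-2 ∧ bext b (i/4) (j-1) = true)

instance (b : Fin (n/4) × Fin (n-2) → Bool) (i j : ℕ) : Decidable (PN b i j) := by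
  unfold PN; infer_instance

/-- the comb predicate on cells -/
def PC (b : Fin (n/4) × Fin (n-2) → Bool) (p : Fin n × Fin n) : Prop :=
  PN b p.1.val p.2.val

instance (b : Fin (n/4) × Fin (n-2) → Bool) : DecidablePred (PC b) := fun p => by
  unfold PC; infer_instance

/-- natural-coordinate cell -/
def F (i j : ℕ) : Fin n × Fin n := ((i : Fin n), (j : Fin n))

lemma valcast {m : ℕ} (hm : m < n) : ((m : Fin n) : ℕ) = m := by
  rw [Fin.val_natCast]
  exact Nat.mod_eq_of_lt hm

lemma PC_F (b : Fin (n/4) × Fin (n-2) → Bool) (i j : ℕ) (hi : i < n) (hj : j < n) :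
    PC b (F i j) ↔ PN b i j := by
  unfold PC F
  rw [show ((i : Fin n) : ℕ) = i from valcast hi, show ((j : Fin n) : ℕ) = j from valcast hj]

lemma notPN_j (b : Fin (n/4) × Fin (n-2) → Bool) (i j : ℕ) (hj0 : j ≠ 0) (hj2 : ¬ j ≤ n-2) :
    ¬ PN b i j := by
  rintro (h | ⟨_, _, _, h⟩ | ⟨_, _, _, h, _⟩) <;> omega

lemma notPN_i (b : Fin (n/4) × Fin (n-2) → Bool) (i j : ℕ)
    (him : i % 4 = 3 ∨ 4*(n/4) ≤ i) (hj0 : j ≠ 0) : ¬ PN b i j := by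
  rintro (h | ⟨h1, h2, _, _⟩ | ⟨h1, h2, _, _, _⟩) <;> omega

section ConnComb

variable (b : Fin (n/4) × Fin (n-2) → Bool) {y : EuclideanSpace ℝ (Fin n × Fin n)}
  (hy : y ∈ KT (Tpred (PC b))) (hn : 18 ≤ n)

include hy hn

lemma ceqH (i j : ℕ) (hi : i < n) (hj : j + 1 < n) (h : PN b i j ↔ PN b i (j+1)) :
    y (F i j) = y (F i (j+1)) := by
  have := stepH (pred := PC b) hy (i : Fin n) (j : Fin n) (by
    rw [cast_add_one']
    rw [show ((i : Fin n), (j : Fin n)) = F i j from rfl,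
      show ((i : Fin n), ((j+1 : ℕ) : Fin n)) = F i (j+1) from rfl]
    rw [PC_F b i j hi (by omega), PC_F b i (j+1) hi hj]
    exact h)
  rw [cast_add_one'] at this
  exact this

lemma ceqV (i j : ℕ) (hi : i + 1 < n) (hj : j < n) (h : PN b i j ↔ PN b (i+1) j) :
    y (F i j) = y (F (i+1) j) := by
  have := stepV (pred := PC b) hy (i : Fin n) (j : Fin n) (by
    rw [cast_add_one']
    rw [show ((i : Fin n), (j : Fin n)) = F i j from rfl,
      show (((i+1 : ℕ) : Fin n), (j : Fin n)) = F (i+1) j from rfl]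
    rw [PC_F b i j (by omega) hj, PC_F b (i+1) j hi hj]
    exact h)
  rw [cast_add_one'] at this
  exact this

lemma col0 : ∀ i, i < n → y (F i 0) = y (F 0 0) := by
  intro i
  induction i with
  | zero => intro _; rfl
  | succ i ih =>
    intro hi
    rw [← ceqV b hy hn i 0 hi (by omega)
      (iff_of_true (Or.inl rfl) (Or.inl rfl))]
    exact ih (by omega)

lemma spine : ∀ r, r < n/4 → ∀ j, j ≤ n-2 → y (F (4*r) j) = y (F 0 0) := by
  intro r hr j
  induction j with
  | zero => intro _; exact col0 b hy hn (4*r) (by omega)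
  | succ j ih =>
    intro hj
    have hPj : PN b (4*r) j := by
      rcases Nat.eq_zero_or_pos j with h0 | h1
      · exact Or.inl h0
      · exact Or.inr (Or.inl ⟨by omega, by omega, h1, by omega⟩)
    have hPj1 : PN b (4*r) (j+1) :=
      Or.inr (Or.inl ⟨by omega, by omega, by omega, by omega⟩)
    rw [← ceqH b hy hn (4*r) j (by omega) (by omega) (iff_of_true hPj hPj1)]
    exact ih (by omega)

lemma protS (r j : ℕ) (hr : r < n/4) (hj1 : 1 ≤ j) (hj2 : j ≤ n-2)
    (hb : bext b r (j-1) = true) :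
    y (F (4*r+1) j) = y (F 0 0) ∧ y (F (4*r+2) j) = y (F 0 0) := by
  have hd1 : (4*r+1)/4 = r := by omega
  have hd2 : (4*r+2)/4 = r := by omega
  have h1 : PN b (4*r+1) j := by
    unfold PN
    rw [hd1]
    right; right
    exact ⟨by omega, by omega, hj1, hj2, hb⟩
  have h2 : PN b (4*r+2) j := by
    unfold PN
    rw [hd2]
    right; right
    exact ⟨by omega, by omega, hj1, hj2, hb⟩
  have h0 : PN b (4*r) j := Or.inr (Or.inl ⟨by omega, by omega, hj1, hj2⟩)
  have e1 : y (F (4*r) j) = y (F (4*r+1) j) :=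
    ceqV b hy hn (4*r) j (by omega) (by omega) (by constructor <;> intro <;> assumption)
  have e2 : y (F (4*r+1) j) = y (F (4*r+2) j) := by
    have := ceqV b hy hn (4*r+1) j (by omega) (by omega)
      (by constructor <;> intro <;> [exact (by rw [show 4*r+1+1 = 4*r+2 from rfl]; exact h2); exact h1])
    rw [show 4*r+1+1 = 4*r+2 from rfl] at this
    exact this
  have hsp := spine b hy hn r hr j hj2
  constructor
  · rw [← e1]; exact hsp
  · rw [← e2, ← e1]; exact hsp

lemma Sconst : ∀ p : Fin n × Fin n, PC b p → y p = y (F 0 0) := by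
  intro p hp
  have hFp : F p.1.val p.2.val = p := by
    unfold F
    rw [Fin.cast_val_eq_self, Fin.cast_val_eq_self]
  set i := p.1.val with hidef
  set j := p.2.val with hjdef
  have hi : i < n := p.1.isLt
  have hj : j < n := p.2.isLt
  rw [← hFp]
  have hp' : PN b i j := hp
  rcases hp' with h0 | h1 | h2
  · rw [h0]; exact col0 b hy hn i hi
  · obtain ⟨hm, hlt, hj1, hj2⟩ := h1
    have : i = 4*(i/4) := by omega
    rw [this]
    exact spine b hy hn (i/4) (by omega) j hj2
  · obtain ⟨hm, hlt, hj1, hj2, hb⟩ := h2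
    rcases hm with hm | hm
    · have : i = 4*(i/4)+1 := by omega
      rw [this]
      exact (protS b hy hn (i/4) j (by omega) hj1 hj2 (by rw [show i/4 = (4*(i/4)+1)/4 from by omega, ← this]; exact hb)).1
    · have : i = 4*(i/4)+2 := by omega
      rw [this]
      exact (protS b hy hn (i/4) j (by omega) hj1 hj2 (by rw [show i/4 = (4*(i/4)+2)/4 from by omega, ← this]; exact hb)).2

lemma coln1 : ∀ i, i < n → y (F i (n-1)) = y (F 0 (n-1)) := by
  intro i
  induction i with
  | zero => intro _; rfl
  | succ i ih =>
    intro hi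
    rw [← ceqV b hy hn i (n-1) hi (by omega)
      (iff_of_false (notPN_j b i (n-1) (by omega) (by omega))
        (notPN_j b (i+1) (n-1) (by omega) (by omega)))]
    exact ih (by omega)

lemma crow : ∀ i, i < n → (i % 4 = 3 ∨ 4*(n/4) ≤ i) →
    ∀ t j, j = n-1-t → 1 ≤ j → y (F i j) = y (F i (n-1)) := by
  intro i hi him t
  induction t with
  | zero =>
    intro j hj _
    rw [hj, show n-1-0 = n-1 from rfl]
  | succ t ih =>
    intro j hj hj1
    by_cases hteq : n-1-t = 0
    · rw [show j = n-1 from by omega]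
    · have hjn : j + 1 = n-1-t := by omega
      have step : y (F i j) = y (F i (j+1)) := by
        apply ceqH b hy hn i j hi (by omega)
        exact iff_of_false (notPN_i b i j him (by omega)) (notPN_i b i (j+1) him (by omega))
      rw [step, hjn]
      exact ih (n-1-t) rfl (by omega)

lemma protC (r j : ℕ) (hr : r < n/4) (hj1 : 1 ≤ j) (hj2 : j ≤ n-2)
    (hb : bext b r (j-1) = false) :
    y (F (4*r+1) j) = y (F 0 (n-1)) ∧ y (F (4*r+2) j) = y (F 0 (n-1)) := by
  have hd1 : (4*r+1)/4 = r := by omega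
  have hd2 : (4*r+2)/4 = r := by omega
  have h1 : ¬ PN b (4*r+1) j := by
    rintro (h | ⟨h1, _⟩ | ⟨_, _, _, _, hbt⟩)
    · omega
    · omega
    · rw [hd1, hb] at hbt
      exact Bool.false_ne_true hbt
  have h2 : ¬ PN b (4*r+2) j := by
    rintro (h | ⟨h1, _⟩ | ⟨hm, _, _, _, hbt⟩)
    · omega
    · omega
    · rw [hd2, hb] at hbt
      exact Bool.false_ne_true hbt
  have h3 : ¬ PN b (4*r+3) j := notPN_i b (4*r+3) j (Or.inl (by omega)) (by omega)
  have e1 : y (F (4*r+1) j) = y (F (4*r+2) j) := by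
    have := ceqV b hy hn (4*r+1) j (by omega) (by omega)
      (by rw [show 4*r+1+1 = 4*r+2 from rfl]; constructor <;> intro h <;> [exact absurd h h1; exact absurd h h2])
    rw [show 4*r+1+1 = 4*r+2 from rfl] at this
    exact this
  have e2 : y (F (4*r+2) j) = y (F (4*r+3) j) := by
    have := ceqV b hy hn (4*r+2) j (by omega) (by omega)
      (by rw [show 4*r+2+1 = 4*r+3 from rfl]; constructor <;> intro h <;> [exact absurd h h2; exact absurd h h3])
    rw [show 4*r+2+1 = 4*r+3 from rfl] at this
    exact this
  have e3 : y (F (4*r+3) j) = y (F (4*r+3) (n-1)) :=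
    crow b hy hn (4*r+3) (by omega) (by omega) (n-1-j) j (by omega) hj1
  have e4 : y (F (4*r+3) (n-1)) = y (F 0 (n-1)) := coln1 b hy hn (4*r+3) (by omega)
  constructor
  · rw [e1, e2, e3, e4]
  · rw [e2, e3, e4]

lemma Cconst : ∀ p : Fin n × Fin n, ¬ PC b p → y p = y (F 0 (n-1)) := by
  intro p hp
  have hFp : F p.1.val p.2.val = p := by
    unfold F
    rw [Fin.cast_val_eq_self, Fin.cast_val_eq_self]
  set i := p.1.val with hidef
  set j := p.2.val with hjdef
  have hi : i < n := p.1.isLt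
  have hj : j < n := p.2.isLt
  rw [← hFp]
  have hp' : ¬ PN b i j := hp
  have hj0 : j ≠ 0 := by
    intro h; exact hp' (Or.inl h)
  by_cases hjn : j = n-1
  · rw [hjn]; exact coln1 b hy hn i hi
  · have hj2 : j ≤ n-2 := by omega
    have hj1 : 1 ≤ j := by omega
    by_cases hic : i < 4*(n/4)
    · rcases (show i % 4 = 0 ∨ i % 4 = 1 ∨ i % 4 = 2 ∨ i % 4 = 3 from by omega) with hm | hm | hm | hm
      · exact absurd (Or.inr (Or.inl ⟨hm, hic, hj1, hj2⟩) : PN b i j) hp'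
      · have hbf : bext b (i/4) (j-1) = false := by
          rcases Bool.eq_false_or_eq_true (bext b (i/4) (j-1)) with h | h
          · exact absurd (show PN b i j from Or.inr (Or.inr ⟨Or.inl hm, hic, hj1, hj2, h⟩)) hp'
          · exact h
        have : i = 4*(i/4)+1 := by omega
        rw [this]
        exact (protC b hy hn (i/4) j (by omega) hj1 hj2 (by rw [show i/4 = (4*(i/4)+1)/4 from by omega, ← this]; exact hbf)).1
      · have hbf : bext b (i/4) (j-1) = false := by
          rcases Bool.eq_false_or_eq_true (bext b (i/4) (j-1)) with h | h
          · exact absurd (show PN b i j from Or.inr (Or.inr ⟨Or.inr hm, hic, hj1, hj2, h⟩)) hp'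
          · exact h
        have : i = 4*(i/4)+2 := by omega
        rw [this]
        exact (protC b hy hn (i/4) j (by omega) hj1 hj2 (by rw [show i/4 = (4*(i/4)+2)/4 from by omega, ← this]; exact hbf)).2
      · have := crow b hy hn i hi (Or.inl hm) (n-1-j) j (by omega) hj1
        rw [this]
        exact coln1 b hy hn i hi
    · have := crow b hy hn i hi (Or.inr (by omega)) (n-1-j) j (by omega) hj1
      rw [this]
      exact coln1 b hy hn i hi

end ConnComb

section CombCard

open Finset

variable {n : ℕ} [NeZero n] (hn : 18 ≤ n)

/-- the comb set as a finset -/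
def SS (b : Fin (n/4) × Fin (n-2) → Bool) : Finset (Fin n × Fin n) :=
  univ.filter (PC b)

def A0 : Finset (Fin n × Fin n) := univ.image (fun i : Fin n => (i, (0 : Fin n)))

def A1 : Finset (Fin n × Fin n) :=
  (univ : Finset (Fin (n/4) × Fin (n-2))).image
    (fun rt => (((4*rt.1.val : ℕ) : Fin n), ((rt.2.val+1 : ℕ) : Fin n)))

def A2 (b : Fin (n/4) × Fin (n-2) → Bool) : Finset (Fin n × Fin n) :=
  ((univ.filter (fun v : Fin (n/4) × Fin (n-2) => b v = true)) ×ˢ (univ : Finset (Fin 2))).image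
    (fun vk => (((4*vk.1.1.val + 1 + vk.2.val : ℕ) : Fin n), ((vk.1.2.val+1 : ℕ) : Fin n)))

include hn

lemma memA0 (p : Fin n × Fin n) : p ∈ (A0 : Finset (Fin n × Fin n)) ↔ p.2.val = 0 := by
  unfold A0
  simp only [Finset.mem_image, Finset.mem_univ, true_and]
  constructor
  · rintro ⟨i, rfl⟩; rfl
  · intro h
    refine ⟨p.1, ?_⟩
    have : p.2 = 0 := Fin.ext (by simpa using h)
    rw [← this]

lemma memA1 (p : Fin n × Fin n) : p ∈ (A1 : Finset (Fin n × Fin n)) ↔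
    (p.1.val % 4 = 0 ∧ p.1.val < 4*(n/4) ∧ 1 ≤ p.2.val ∧ p.2.val ≤ n-2) := by
  unfold A1
  simp only [Finset.mem_image, Finset.mem_univ, true_and]
  constructor
  · rintro ⟨⟨r, t⟩, rfl⟩
    have hr : r.val < n/4 := r.isLt
    have ht : t.val < n-2 := t.isLt
    rw [show (((4*r.val : ℕ) : Fin n) : ℕ) = 4*r.val from valcast (by omega)]
    rw [show (((t.val+1 : ℕ) : Fin n) : ℕ) = t.val+1 from valcast (by omega)]
    exact ⟨by omega, by omega, by omega, by omega⟩
  · rintro ⟨h1, h2, h3, h4⟩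
    refine ⟨(⟨p.1.val/4, by omega⟩, ⟨p.2.val-1, by omega⟩), ?_⟩
    have e1 : ((4*(p.1.val/4) : ℕ) : Fin n) = p.1 := by
      rw [show 4*(p.1.val/4) = p.1.val from by omega, Fin.cast_val_eq_self]
    have e2 : ((p.2.val-1+1 : ℕ) : Fin n) = p.2 := by
      rw [show p.2.val-1+1 = p.2.val from by omega, Fin.cast_val_eq_self]
    rw [show (⟨p.1.val/4, by omega⟩ : Fin (n/4)).val = p.1.val/4 from rfl]
    rw [show (⟨p.2.val-1, by omega⟩ : Fin (n-2)).val = p.2.val-1 from rfl]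
    rw [e1, e2]

lemma memA2 (b : Fin (n/4) × Fin (n-2) → Bool) (p : Fin n × Fin n) :
    p ∈ (A2 b : Finset (Fin n × Fin n)) ↔
    ((p.1.val % 4 = 1 ∨ p.1.val % 4 = 2) ∧ p.1.val < 4*(n/4) ∧ 1 ≤ p.2.val ∧ p.2.val ≤ n-2
      ∧ bext b (p.1.val/4) (p.2.val-1) = true) := by
  unfold A2
  simp only [Finset.mem_image, Finset.mem_product, Finset.mem_filter, Finset.mem_univ, true_and,
    and_true]
  constructor
  · rintro ⟨⟨⟨r, t⟩, k⟩, hb, rfl⟩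
    simp only [Finset.mem_filter, Finset.mem_univ, true_and, Finset.mem_product, and_true] at hb
    have hr : r.val < n/4 := r.isLt
    have ht : t.val < n-2 := t.isLt
    have hk : k.val < 2 := k.isLt
    rw [show (((4*r.val + 1 + k.val : ℕ) : Fin n) : ℕ) = 4*r.val + 1 + k.val from
      valcast (by omega)]
    rw [show (((t.val+1 : ℕ) : Fin n) : ℕ) = t.val+1 from valcast (by omega)]
    refine ⟨by omega, by omega, by omega, by omega, ?_⟩
    rw [show (4*r.val + 1 + k.val)/4 = r.val from by omega,
      show t.val + 1 - 1 = t.val from by omega]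
    unfold bext
    rw [dif_pos ⟨hr, ht⟩]
    simpa using hb
  · rintro ⟨h1, h2, h3, h4, h5⟩
    have hr : p.1.val/4 < n/4 := by omega
    have ht : p.2.val - 1 < n-2 := by omega
    have hb5 : b (⟨p.1.val/4, hr⟩, ⟨p.2.val-1, ht⟩) = true := by
      unfold bext at h5
      rw [dif_pos ⟨hr, ht⟩] at h5
      exact h5
    refine ⟨((⟨p.1.val/4, hr⟩, ⟨p.2.val-1, ht⟩), ⟨p.1.val % 4 - 1, by omega⟩), hb5, ?_⟩
    have e1 : ((4*(p.1.val/4) + 1 + (p.1.val % 4 - 1) : ℕ) : Fin n) = p.1 := by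
      rw [show 4*(p.1.val/4) + 1 + (p.1.val % 4 - 1) = p.1.val from by omega,
        Fin.cast_val_eq_self]
    have e2 : ((p.2.val-1+1 : ℕ) : Fin n) = p.2 := by
      rw [show p.2.val-1+1 = p.2.val from by omega, Fin.cast_val_eq_self]
    show ((( 4*(p.1.val/4) + 1 + (p.1.val % 4 - 1) : ℕ) : Fin n),
      ((p.2.val-1+1 : ℕ) : Fin n)) = p
    rw [e1, e2]

lemma SS_eq (b : Fin (n/4) × Fin (n-2) → Bool) :
    (SS b : Finset (Fin n × Fin n)) = (A0 ∪ A1) ∪ A2 b := by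
  ext p
  rw [Finset.mem_union, Finset.mem_union, memA0 hn, memA1 hn, memA2 hn]
  unfold SS
  simp only [Finset.mem_filter, Finset.mem_univ, true_and]
  unfold PC PN
  constructor
  · rintro (h | h | ⟨h1, h2, h3, h4, h5⟩)
    · exact Or.inl (Or.inl h)
    · exact Or.inl (Or.inr h)
    · exact Or.inr ⟨h1, h2, h3, h4, h5⟩
  · rintro ((h | h) | ⟨h1, h2, h3, h4, h5⟩)
    · exact Or.inl h
    · exact Or.inr (Or.inl h)
    · exact Or.inr (Or.inr ⟨h1, h2, h3, h4, h5⟩)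

lemma cardA0 : (A0 : Finset (Fin n × Fin n)).card = n := by
  unfold A0
  rw [Finset.card_image_of_injective _ (fun a b h => (Prod.ext_iff.mp h).1)]
  simp

lemma cardA1 : (A1 : Finset (Fin n × Fin n)).card = (n/4) * (n-2) := by
  unfold A1
  rw [Finset.card_image_of_injOn, Finset.card_univ, Fintype.card_prod, Fintype.card_fin,
    Fintype.card_fin]
  intro ⟨r1, t1⟩ _ ⟨r2, t2⟩ _ h
  have h1 := congrArg (fun q : Fin n × Fin n => q.1.val) h
  have h2 := congrArg (fun q : Fin n × Fin n => q.2.val) h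
  simp only at h1 h2
  rw [valcast (show 4*r1.val < n from by have := r1.isLt; omega),
    valcast (show 4*r2.val < n from by have := r2.isLt; omega)] at h1
  rw [valcast (show t1.val+1 < n from by have := t1.isLt; omega),
    valcast (show t2.val+1 < n from by have := t2.isLt; omega)] at h2
  have : r1 = r2 := Fin.ext (by omega)
  have : t1 = t2 := Fin.ext (by omega)
  simp_all

lemma cardA2 (b : Fin (n/4) × Fin (n-2) → Bool) :
    (A2 b : Finset (Fin n × Fin n)).card = 2 * wt b := by
  unfold A2
  rw [Finset.card_image_of_injOn]
  · rw [Finset.card_product, Finset.card_univ, Fintype.card_fin]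
    unfold wt
    ring
  · intro ⟨⟨r1, t1⟩, k1⟩ _ ⟨⟨r2, t2⟩, k2⟩ _ h
    have h1 := congrArg (fun q : Fin n × Fin n => q.1.val) h
    have h2 := congrArg (fun q : Fin n × Fin n => q.2.val) h
    simp only at h1 h2
    have hr1 := r1.isLt; have hr2 := r2.isLt
    have ht1 := t1.isLt; have ht2 := t2.isLt
    have hk1 := k1.isLt; have hk2 := k2.isLt
    rw [valcast (show 4*r1.val+1+k1.val < n from by omega),
      valcast (show 4*r2.val+1+k2.val < n from by omega)] at h1
    rw [valcast (show t1.val+1 < n from by omega),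
      valcast (show t2.val+1 < n from by omega)] at h2
    have e1 : r1 = r2 := Fin.ext (by omega)
    have e2 : t1 = t2 := Fin.ext (by omega)
    have e3 : k1 = k2 := Fin.ext (by omega)
    simp_all

lemma cardSS (b : Fin (n/4) × Fin (n-2) → Bool) :
    (SS b : Finset (Fin n × Fin n)).card = n + (n/4)*(n-2) + 2 * wt b := by
  rw [SS_eq hn b]
  have d01 : Disjoint (A0 : Finset (Fin n × Fin n)) A1 := by
    rw [Finset.disjoint_left]
    intro p h0 h1
    rw [memA0 hn] at h0
    rw [memA1 hn] at h1
    omega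
  have d012 : Disjoint ((A0 ∪ A1) : Finset (Fin n × Fin n)) (A2 b) := by
    rw [Finset.disjoint_left]
    intro p h0 h2
    rw [Finset.mem_union, memA0 hn, memA1 hn] at h0
    rw [memA2 hn] at h2
    rcases h0 with h0 | h0 <;> omega
  rw [Finset.card_union_of_disjoint d012, Finset.card_union_of_disjoint d01,
    cardA0 hn, cardA1 hn, cardA2 hn b]

lemma bext_and (b b' : Fin (n/4) × Fin (n-2) → Bool) (r t : ℕ) :
    bext (fun v => b v && b' v) r t = (bext b r t && bext b' r t) := by
  unfold bext
  split <;> simp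

lemma SS_inter (b b' : Fin (n/4) × Fin (n-2) → Bool) :
    (SS b ∩ SS b' : Finset (Fin n × Fin n)) = SS (fun v => b v && b' v) := by
  ext p
  unfold SS
  simp only [Finset.mem_inter, Finset.mem_filter, Finset.mem_univ, true_and]
  unfold PC PN
  rw [bext_and hn]
  constructor
  · rintro ⟨h | h | ⟨h1, h2, h3, h4, h5⟩, h' | h' | ⟨h1', h2', h3', h4', h5'⟩⟩
    · exact Or.inl h
    · omega
    · omega
    · omega
    · exact Or.inr (Or.inl h)
    · omega
    · omega
    · omega
    · exact Or.inr (Or.inr ⟨h1, h2, h3, h4, by rw [Bool.and_eq_true]; exact ⟨h5, h5'⟩⟩)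
  · rintro (h | h | ⟨h1, h2, h3, h4, h5⟩)
    · exact ⟨Or.inl h, Or.inl h⟩
    · exact ⟨Or.inr (Or.inl h), Or.inr (Or.inl h)⟩
    · rw [Bool.and_eq_true] at h5
      exact ⟨Or.inr (Or.inr ⟨h1, h2, h3, h4, h5.1⟩), Or.inr (Or.inr ⟨h1, h2, h3, h4, h5.2⟩)⟩

lemma wt_and (b b' : Fin (n/4) × Fin (n-2) → Bool) :
    wt (fun v => b v && b' v) =
      ((univ.filter fun v => b v = true) ∩ (univ.filter fun v => b' v = true)).card := by
  unfold wt
  congr 1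
  ext v
  simp [Bool.and_eq_true]

end CombCard
end Comb


section Norms
variable {n : ℕ} [NeZero n]


lemma norm_indic (pred : Fin n × Fin n → Prop) [DecidablePred pred] (u : ℝ) :
    ‖indic pred u 0‖ = Real.sqrt (((univ.filter pred).card : ℝ) * u^2) := by
  rw [EuclideanSpace.norm_eq]
  congr 1
  have h : ∀ p : Fin n × Fin n, ‖indic pred u 0 p‖^2 = if pred p then u^2 else 0 := by
    intro p
    by_cases h : pred p <;> simp [indic, h, sq_abs]
  rw [Finset.sum_congr rfl (fun p _ => h p), ← Finset.sum_filter]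
  simp [mul_comm]

lemma norm_sub_indic (P Q : Fin n × Fin n → Prop) [DecidablePred P] [DecidablePred Q] (u : ℝ) :
    ‖indic P u 0 - indic Q u 0‖ =
      Real.sqrt ((((univ.filter P \ univ.filter Q) ∪ (univ.filter Q \ univ.filter P)).card : ℝ)
        * u^2) := by
  rw [EuclideanSpace.norm_eq]
  congr 1
  have h : ∀ p : Fin n × Fin n, ‖(indic P u 0 - indic Q u 0) p‖^2
      = if p ∈ (univ.filter P \ univ.filter Q) ∪ (univ.filter Q \ univ.filter P)
        then u^2 else 0 := by
    intro p
    have hmem : p ∈ (univ.filter P \ univ.filter Q) ∪ (univ.filter Q \ univ.filter P)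
        ↔ ((P p ∧ ¬ Q p) ∨ (Q p ∧ ¬ P p)) := by
      simp [Finset.mem_union, Finset.mem_sdiff, Finset.mem_filter]
    rw [PiLp.sub_apply]
    by_cases hP : P p <;> by_cases hQ : Q p <;>
      simp [indic, hP, hQ, hmem, sq_abs]
  rw [Finset.sum_congr rfl (fun p _ => h p)]
  rw [Finset.sum_ite_mem]
  simp [mul_comm]


end Norms

section Numeric

/-- `n^2 ≤ 2^n` for `n ≥ 5`. -/
lemma sq_le_two_pow {N : ℕ} (hN : 5 ≤ N) : N^2 ≤ 2^N := by
  induction N, hN using Nat.le_induction with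
  | base => norm_num
  | succ N hN ih =>
    have h1 : (N+1)^2 ≤ 2*N^2 := by nlinarith
    calc (N+1)^2 ≤ 2*N^2 := h1
      _ ≤ 2*2^N := by omega
      _ = 2^(N+1) := by ring

/-- `68^(n²) ≤ 25^(n²) · 2^(13·⌈n²/9⌉)`. -/
lemma L68 (M : ℕ) : 68^M ≤ 25^M * 2^(13*((M+8)/9)) := by
  set q := (M+8)/9 with hq
  have h9 : M ≤ 9*q := by omega
  have base : (68:ℕ)^9 ≤ 25^9 * 2^13 := by norm_num
  have e := 9*q - M
  have hsplit : 9*q = M + (9*q - M) := by omega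
  have h1 : 68^M * 25^(9*q - M) ≤ 68^M * 68^(9*q - M) := by
    apply Nat.mul_le_mul_left
    exact Nat.pow_le_pow_left (by norm_num) _
  have h2 : (68:ℕ)^M * 68^(9*q-M) = 68^(9*q) := by
    rw [← pow_add]
    congr 1
    omega
  have h3 : (68:ℕ)^(9*q) = (68^9)^q := by rw [← pow_mul]
  have h4 : ((68:ℕ)^9)^q ≤ (25^9 * 2^13)^q := Nat.pow_le_pow_left base q
  have h5 : ((25:ℕ)^9 * 2^13)^q = 25^(9*q) * 2^(13*q) := by
    rw [mul_pow, ← pow_mul, ← pow_mul]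
  have h6 : (25:ℕ)^(9*q) = 25^M * 25^(9*q-M) := by
    rw [← pow_add]
    congr 1
  have chain : 68^M * 25^(9*q-M) ≤ (25^M * 2^(13*q)) * 25^(9*q-M) := by
    calc 68^M * 25^(9*q-M) ≤ 68^M * 68^(9*q-M) := h1
      _ = 68^(9*q) := h2
      _ = (68^9)^q := h3
      _ ≤ (25^9 * 2^13)^q := h4
      _ = 25^(9*q) * 2^(13*q) := h5
      _ = (25^M * 25^(9*q-M)) * 2^(13*q) := by rw [h6]
      _ = (25^M * 2^(13*q)) * 25^(9*q-M) := by ring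
  exact Nat.le_of_mul_le_mul_right chain (Nat.pow_pos (by norm_num))

end Numeric

section Numeric2

/-- central binomial lower bound, squared form. -/
lemma cent : ∀ k, 1 ≤ k → 16^k ≤ 4*k * ((2*k).choose k)^2 := by
  intro k
  induction k with
  | zero => omega
  | succ k ih =>
    intro _
    rcases Nat.eq_zero_or_pos k with rfl | hk
    · decide
    · have IH := ih hk
      have A : (2*k+2) * (2*k+1).choose k = ((2*k+2).choose (k+1)) * (k+1) := by
        have := Nat.add_one_mul_choose_eq (2*k+1) k
        exact this
      have B0 : (2*k+1) * (2*k).choose k = ((2*k+1).choose (k+1)) * (k+1) := by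
        have := Nat.add_one_mul_choose_eq (2*k) k
        exact this
      have Bsym : (2*k+1).choose (k+1) = (2*k+1).choose k := by
        have h := Nat.choose_symm (show k+1 ≤ 2*k+1 by omega)
        rw [show 2*k+1 - (k+1) = k from by omega] at h
        exact h.symm
      have B : (2*k+1) * (2*k).choose k = ((2*k+1).choose k) * (k+1) := by
        rw [B0, Bsym]
      have comb : (k+1)^2 * (2*(k+1)).choose (k+1) = (2*k+2)*(2*k+1)*((2*k).choose k) := by
        have e1 : (2*(k+1)) = 2*k+2 := by ring
        rw [e1]
        calc (k+1)^2 * (2*k+2).choose (k+1)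
            = (k+1) * ((2*k+2).choose (k+1) * (k+1)) := by ring
          _ = (k+1) * ((2*k+2) * (2*k+1).choose k) := by rw [← A]
          _ = (2*k+2) * ((2*k+1).choose k * (k+1)) := by ring
          _ = (2*k+2) * ((2*k+1) * (2*k).choose k) := by rw [← B]
          _ = (2*k+2)*(2*k+1)*((2*k).choose k) := by ring
      set C := (2*k).choose k with hC
      set Cp := (2*(k+1)).choose (k+1) with hCp
      -- goal: 16^(k+1) ≤ 4*(k+1) * Cp^2
      have hpos : 0 < (k+1)^4 * (4*k) := by positivity
      refine Nat.le_of_mul_le_mul_right ?_ hpos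
      have expand : 4*(k+1) * Cp^2 * ((k+1)^4 * (4*k))
          = 4*(k+1) * ((k+1)^2 * Cp)^2 * (4*k) := by ring
      rw [expand, comb]
      have step1 : 4*(k+1) * ((2*k+2)*(2*k+1)*C)^2 * (4*k)
          = (4*(k+1) * ((2*k+2)*(2*k+1))^2) * (4*k*C^2) := by ring
      rw [step1]
      have step2 : (4*(k+1) * ((2*k+2)*(2*k+1))^2) * (4*k*C^2)
          ≥ (4*(k+1) * ((2*k+2)*(2*k+1))^2) * 16^k := Nat.mul_le_mul_left _ IH
      refine le_trans ?_ step2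
      have poly : 16 * ((k+1)^4 * (4*k)) ≤ 4*(k+1) * ((2*k+2)*(2*k+1))^2 := by nlinarith
      calc 16^(k+1) * ((k+1)^4 * (4*k)) = (16 * ((k+1)^4 * (4*k))) * 16^k := by ring
        _ ≤ (4*(k+1) * ((2*k+2)*(2*k+1))^2) * 16^k := Nat.mul_le_mul_right _ poly

/-- middle binomial squared bound. -/
lemma middle_sq (N : ℕ) (hN : 1 ≤ N) : 4^N ≤ (2*N+2) * (N.choose (N/2))^2 := by
  rcases Nat.even_or_odd N with ⟨k, hk⟩ | ⟨k, hk⟩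
  · have hk1 : 1 ≤ k := by omega
    have h := cent k hk1
    have e1 : N = 2*k := by omega
    have e2 : N/2 = k := by omega
    rw [e2, e1, show (4:ℕ)^(2*k) = 16^k from by rw [pow_mul]; norm_num]
    calc 16^k ≤ 4*k * ((2*k).choose k)^2 := h
      _ ≤ (2*(2*k)+2) * ((2*k).choose k)^2 := Nat.mul_le_mul_right _ (by omega)
  · rcases Nat.eq_zero_or_pos k with rfl | hk1
    · have : N = 1 := by omega
      subst this
      decide
    · have h := cent k hk1
      have e1 : N = 2*k+1 := by omega
      have e2 : N/2 = k := by omega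
      rw [e2, e1]
      have B0 : (2*k+1) * (2*k).choose k = ((2*k+1).choose (k+1)) * (k+1) := by
        have := Nat.add_one_mul_choose_eq (2*k) k
        exact this
      have Bsym : (2*k+1).choose (k+1) = (2*k+1).choose k := by
        have h2 := Nat.choose_symm (show k+1 ≤ 2*k+1 by omega)
        rw [show 2*k+1 - (k+1) = k from by omega] at h2
        exact h2.symm
      have B : (2*k+1) * (2*k).choose k = ((2*k+1).choose k) * (k+1) := by
        rw [B0, Bsym]
      set C := (2*k).choose k with hC
      set Cq := (2*k+1).choose k with hCq
      have hpos : 0 < (k+1)^2 * (4*k) := by positivity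
      refine Nat.le_of_mul_le_mul_right ?_ hpos
      have expand : (2*(2*k+1)+2) * Cq^2 * ((k+1)^2 * (4*k))
          = (4*k+4) * (Cq*(k+1))^2 * (4*k) := by ring
      rw [expand]
      have e3 : Cq * (k+1) = (2*k+1) * C := by rw [hCq, hC, ← B]
      rw [e3]
      have step1 : (4*k+4) * ((2*k+1)*C)^2 * (4*k) = ((4*k+4) * (2*k+1)^2) * (4*k*C^2) := by
        ring
      rw [step1]
      have step2 : ((4*k+4) * (2*k+1)^2) * (4*k*C^2) ≥ ((4*k+4) * (2*k+1)^2) * 16^k :=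
        Nat.mul_le_mul_left _ h
      refine le_trans ?_ step2
      have poly : 4 * ((k+1)^2 * (4*k)) ≤ (4*k+4) * (2*k+1)^2 := by nlinarith
      calc 4^(2*k+1) * ((k+1)^2 * (4*k))
          = (4 * ((k+1)^2 * (4*k))) * 16^k := by
            rw [show (16:ℕ)^k = 4^(2*k) from by rw [pow_mul]; norm_num]
            ring
        _ ≤ ((4*k+4) * (2*k+1)^2) * 16^k := Nat.mul_le_mul_right _ poly

end Numeric2

section Numeric3

/-- the main numeric criterion. -/
lemma numcrit (n : ℕ) (hn : 18 ≤ n) :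
    68^(n^2) * (∑ j ∈ Finset.range (2*(((n + (n/4)*(n-2) + 2*((n/4)*(n-2)/2)) + 15)/16) - 1),
        ((n/4)*(n-2)).choose j)^64
      ≤ 25^(n^2) * (((n/4)*(n-2)).choose ((n/4)*(n-2)/2))^64 := by
  by_cases hbig : n ≤ 38
  · interval_cases n <;>
    · simp only [Nat.choose_eq_descFactorial_div_factorial]
      decide
  · -- symbolic regime n ≥ 39
    push_neg at hbig
    set NN := (n/4)*(n-2) with hNN
    set w := NN/2 with hw
    set s := n + NN + 2*w with hs
    set D := 2*((s+15)/16) with hD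
    set m := D - 2 with hm
    set SUM := ∑ j ∈ Finset.range (D-1), NN.choose j with hSUM
    have hrange : D - 1 = m + 1 := by
      have : 2 ≤ (s+15)/16 := by
        have hsn : 33 ≤ s := by omega
        omega
      omega
    -- basic size facts
    have f6 : 4*(n-2) ≤ NN := by
      rw [hNN]
      exact Nat.mul_le_mul_right _ (by omega)
    have f4 : (n-3)*(n-2) ≤ 4*NN := by
      rw [hNN, show 4*((n/4)*(n-2)) = (4*(n/4))*(n-2) from by ring]
      exact Nat.mul_le_mul_right _ (by omega)
    have f4b : 4*NN ≤ n*(n-2) := by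
      rw [hNN, show 4*((n/4)*(n-2)) = (4*(n/4))*(n-2) from by ring]
      exact Nat.mul_le_mul_right _ (by omega)
    have f3 : 8*m + 1 ≤ n + 2*NN := by
      have h16 : 16*((s+15)/16) ≤ s+15 := Nat.mul_div_le _ _ |>.trans (le_refl _) |>.trans (by omega)
      omega
    have hmNN : m ≤ NN := by omega
    have hNN1 : 1 ≤ NN := by omega
    -- reduce to squared inequality
    rw [← Nat.pow_le_pow_iff_left (n := 2) (by norm_num)]
    rw [mul_pow, mul_pow, ← pow_mul, ← pow_mul, ← pow_mul, ← pow_mul]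
    rw [show n^2*2 = 2*n^2 from by ring, show 64*2 = 128 from rfl]
    -- chain
    have t1 : SUM * 3^(NN - m) ≤ 4^NN := by
      rw [hSUM, hrange]
      exact sum3 NN m hmNN
    have t1' : SUM^128 * 3^(128*(NN-m)) ≤ 4^(128*NN) := by
      calc SUM^128 * 3^(128*(NN-m)) = (SUM * 3^(NN-m))^128 := by
            rw [mul_pow, ← pow_mul, Nat.mul_comm (NN-m) 128]
        _ ≤ (4^NN)^128 := Nat.pow_le_pow_left t1 _
        _ = 4^(128*NN) := by rw [← pow_mul, Nat.mul_comm]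
    have t2 : 4^NN ≤ (2*NN+2) * (NN.choose w)^2 := middle_sq NN hNN1
    have t2' : 4^(64*NN) ≤ (2*NN+2)^64 * (NN.choose w)^128 := by
      calc 4^(64*NN) = (4^NN)^64 := by rw [← pow_mul, Nat.mul_comm]
        _ ≤ ((2*NN+2) * (NN.choose w)^2)^64 := Nat.pow_le_pow_left t2 _
        _ = (2*NN+2)^64 * (NN.choose w)^128 := by rw [mul_pow, ← pow_mul]
    -- KEY2
    have q9 := (2*n^2+8)/9
    have key2 : 68^(2*n^2) * 4^(64*NN) * (2*NN+2)^64 ≤ 25^(2*n^2) * 3^(128*(NN-m)) := by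
      have l68 := L68 (2*n^2)
      set q9 := (2*n^2+8)/9 with hq9
      set q12 := (128*(NN-m))/12 with hq12
      -- arithmetic core
      have arith : 13*q9 + 128*NN + 64*n ≤ 19*q12 := by
        have g1 : 9*q9 ≤ 2*n^2+8 := by omega
        have g2 : 12*q12 ≤ 128*(NN-m) ∧ 128*(NN-m) < 12*q12+12 := by
          constructor <;> omega
        have g5 : 39*n ≤ n*n := Nat.mul_le_mul_right n hbig
        have g6 : n*n = n^2 := by ring
        have f4' : n*n + 6 ≤ 4*NN + 5*n := by
          obtain ⟨a, rfl⟩ : ∃ a, n = a + 18 := ⟨n - 18, by omega⟩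
          have e : (a+18-3)*(a+18-2) = a*a + 31*a + 240 := by
            rw [show a+18-3 = a+15 from by omega, show a+18-2 = a+16 from by omega]
            ring
          rw [e] at f4
          have e2 : (a+18)*(a+18) = a*a + 36*a + 324 := by ring
          linarith
        obtain ⟨Q, hQ⟩ : ∃ Q, n*n = Q := ⟨_, rfl⟩
        rw [hQ] at g5 f4'
        rw [← g6, hQ] at g1
        omega
      have pow23 : (2:ℕ)^(19*q12) ≤ 3^(128*(NN-m)) := by
        calc (2:ℕ)^(19*q12) = (2^19)^q12 := by rw [← pow_mul]
          _ ≤ (3^12)^q12 := Nat.pow_le_pow_left (by norm_num) _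
          _ = 3^(12*q12) := by rw [← pow_mul]
          _ ≤ 3^(128*(NN-m)) := Nat.pow_le_pow_right (by norm_num) (by omega)
      have hNb : 2*NN+2 ≤ n^2 := by
        have h2 : 2*NN+2 ≤ n*(n-2)/2 + 2 := by omega
        have : n*(n-2) ≤ n*n := Nat.mul_le_mul_left n (by omega)
        have : n*n = n^2 := by ring
        omega
      have hn2 : n^2 ≤ 2^n := sq_le_two_pow (by omega)
      have hNb2 : (2*NN+2)^64 ≤ 2^(64*n) := by
        calc (2*NN+2)^64 ≤ (2^n)^64 := Nat.pow_le_pow_left (hNb.trans hn2) _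
          _ = 2^(64*n) := by rw [← pow_mul, Nat.mul_comm]
      calc 68^(2*n^2) * 4^(64*NN) * (2*NN+2)^64
          ≤ (25^(2*n^2) * 2^(13*q9)) * 4^(64*NN) * (2*NN+2)^64 := by
            exact Nat.mul_le_mul_right _ (Nat.mul_le_mul_right _ l68)
        _ ≤ (25^(2*n^2) * 2^(13*q9)) * 4^(64*NN) * 2^(64*n) := Nat.mul_le_mul_left _ hNb2
        _ = 25^(2*n^2) * (2^(13*q9) * 2^(128*NN) * 2^(64*n)) := by
            rw [show (4:ℕ)^(64*NN) = 2^(128*NN) from by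
              rw [show (4:ℕ) = 2^2 from rfl, ← pow_mul]
              congr 1
              ring]
            ring
        _ = 25^(2*n^2) * 2^(13*q9 + 128*NN + 64*n) := by rw [← pow_add, ← pow_add]
        _ ≤ 25^(2*n^2) * 2^(19*q12) := by
            exact Nat.mul_le_mul_left _ (Nat.pow_le_pow_right (by norm_num) arith)
        _ ≤ 25^(2*n^2) * 3^(128*(NN-m)) := Nat.mul_le_mul_left _ pow23
    -- combine
    have hposfac : 0 < 3^(128*(NN-m)) * (2*NN+2)^64 := by positivity
    refine Nat.le_of_mul_le_mul_right ?_ hposfac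
    calc 68^(2*n^2) * SUM^128 * (3^(128*(NN-m)) * (2*NN+2)^64)
        = 68^(2*n^2) * (SUM^128 * 3^(128*(NN-m))) * (2*NN+2)^64 := by ring
      _ ≤ 68^(2*n^2) * 4^(128*NN) * (2*NN+2)^64 := by
          exact Nat.mul_le_mul_right _ (Nat.mul_le_mul_left _ t1')
      _ = (68^(2*n^2) * 4^(64*NN) * (2*NN+2)^64) * 4^(64*NN) := by
          rw [show (4:ℕ)^(128*NN) = 4^(64*NN) * 4^(64*NN) from by rw [← pow_add]; congr 1; ring]
          ring
      _ ≤ (25^(2*n^2) * 3^(128*(NN-m))) * 4^(64*NN) := Nat.mul_le_mul_right _ key2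
      _ ≤ (25^(2*n^2) * 3^(128*(NN-m))) * ((2*NN+2)^64 * (NN.choose w)^128) :=
          Nat.mul_le_mul_left _ t2'
      _ = 25^(2*n^2) * (NN.choose w)^128 * (3^(128*(NN-m)) * (2*NN+2)^64) := by ring

end Numeric3

section Bridge

/-- from the power inequality to the exponential bound. -/
lemma exp_le_of_pow (M n2 : ℕ) (hM : 0 < M) (h : 68^n2 ≤ 25^n2 * M^64) :
    Real.exp ((n2:ℝ)/64) ≤ (M:ℝ) := by
  have hbase : Real.exp 1 ≤ 68/25 := by
    have := Real.exp_one_lt_d9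
    linarith
  have hx : (0:ℝ) ≤ (n2:ℝ)/64 := by positivity
  have h1 : Real.exp ((n2:ℝ)/64) = (Real.exp 1) ^ ((n2:ℝ)/64) := (Real.exp_one_rpow _).symm
  have h2 : (Real.exp 1) ^ ((n2:ℝ)/64) ≤ (68/25:ℝ) ^ ((n2:ℝ)/64) :=
    Real.rpow_le_rpow (Real.exp_pos 1).le hbase hx
  rw [h1]
  refine h2.trans ?_
  have hb : (0:ℝ) ≤ 68/25 := by norm_num
  have hMR : (0:ℝ) ≤ (M:ℝ) := Nat.cast_nonneg M
  have key : ((68/25:ℝ) ^ ((n2:ℝ)/64))^(64:ℕ) ≤ (M:ℝ)^(64:ℕ) := by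
    have e1 : ((68/25:ℝ) ^ ((n2:ℝ)/64))^(64:ℕ) = (68/25:ℝ) ^ ((n2:ℝ)/64 * 64) := by
      rw [← Real.rpow_natCast ((68/25:ℝ) ^ ((n2:ℝ)/64)) 64, ← Real.rpow_mul hb]
      norm_num
    have e2 : (n2:ℝ)/64 * 64 = (n2:ℕ) := by field_simp
    rw [e1, e2, Real.rpow_natCast, div_pow]
    rw [div_le_iff₀ (by positivity)]
    have := h
    have hcast : (68:ℝ)^n2 ≤ 25^n2 * (M:ℝ)^64 := by exact_mod_cast h
    linarith
  exact le_of_pow_le_pow_left₀ (by norm_num) hMR key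

/-- `1/2 ≤ √z` given `1/4 ≤ z`. -/
lemma half_le_sqrt {z : ℝ} (h : 1/4 ≤ z) : 1/2 ≤ Real.sqrt z := by
  rw [show (1/2:ℝ) = Real.sqrt (1/4) from by
    rw [show (1/4:ℝ) = (1/2)^2 from by norm_num, Real.sqrt_sq (by norm_num)]]
  exact Real.sqrt_le_sqrt h

end Bridge
end Pf

open Pf

/-- packing of `K₂ ∩ S^{d-1}` of cardinality at least `exp (d/64)` at
scale `1/2`, where `d = n²` and `Ω` is the cyclic 2D finite differences operator. -/
theorem stmt2 (n : ℕ) [NeZero n] (hd : 64 ≤ n ^ 2) :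
    ∃ X : Finset (EuclideanSpace ℝ (Fin n × Fin n)),
      ↑X ⊆ Ktwo n ∩ sphere (0 : EuclideanSpace ℝ (Fin n × Fin n)) 1 ∧
      Real.exp ((n ^ 2 : ℝ) / 64) ≤ (X.card : ℝ) ∧
      ∀ x ∈ X, ∀ y ∈ X, x ≠ y → (1 / 2 : ℝ) ≤ ‖x - y‖ := by
  
  classical
  have hn8 : 8 ≤ n := by
    by_contra hc
    push_neg at hc
    have : n^2 ≤ 7^2 := Nat.pow_le_pow_left (by omega) 2
    omega
  by_cases hsmall : n ≤ 17
  · -- singleton construction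
    set f : Fin n × Fin n → EuclideanSpace ℝ (Fin n × Fin n) :=
      fun p => indic (· = p) 1 0 with hf
    have hinj : Function.Injective f := by
      intro p q hpq
      by_contra hne
      have h1 := congrFun (congrArg WithLp.ofLp hpq) p
      simp only [hf, indic, PiLp.toLp_apply, if_pos rfl] at h1
      rw [if_neg hne] at h1
      norm_num at h1
    refine ⟨Finset.univ.image f, ?_, ?_, ?_⟩
    · intro x hx
      simp only [Finset.coe_image, Set.mem_image, Finset.mem_coe, Finset.coe_univ,
        Set.image_univ, Set.mem_range] at hx
      obtain ⟨p, rfl⟩ := hx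
      constructor
      · exact indic_mem_Ktwo (· = p) p (sp p 1 0) rfl (sp10_ne (by omega) p)
          (single_conn_package (by omega) p) 1 0
      · rw [mem_sphere_zero_iff_norm]
        rw [hf]
        rw [norm_indic]
        rw [show Finset.univ.filter (· = p) = {p} from by
          ext q; simp [Finset.mem_filter]]
        simp
    · have hcard : (Finset.univ.image f).card = n^2 := by
        rw [Finset.card_image_of_injective _ hinj, Finset.card_univ]
        simp [Fintype.card_prod]
        ring
      rw [hcard]
      set k := (n^2+63)/64 with hk
      have h3k : 3^k ≤ n^2 := by
        interval_cases n <;> simp_all <;> norm_num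
      have hexp : Real.exp ((n^2 : ℝ)/64) ≤ (3:ℝ)^k := by
        have h1 : ((n^2 : ℝ))/64 ≤ (k:ℝ) := by
          have : n^2 ≤ 64*k := by omega
          have := (Nat.cast_le (α := ℝ)).mpr this
          push_cast at this ⊢
          linarith
        calc Real.exp ((n^2:ℝ)/64) ≤ Real.exp k := Real.exp_le_exp.mpr h1
          _ = (Real.exp 1)^k := by rw [← Real.exp_nat_mul]; norm_num
          _ ≤ (3:ℝ)^k := by
              apply pow_le_pow_left₀ (Real.exp_pos 1).le
              have := Real.exp_one_lt_d9
              linarith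
      refine hexp.trans ?_
      exact_mod_cast h3k
    · intro x hx y hy hxy
      simp only [Finset.mem_image, Finset.mem_univ, true_and] at hx hy
      obtain ⟨p, rfl⟩ := hx
      obtain ⟨q, rfl⟩ := hy
      have hpq : p ≠ q := fun h => hxy (by rw [h])
      rw [hf]
      rw [norm_sub_indic]
      apply half_le_sqrt
      have hset : ((Finset.univ.filter (· = p) \ Finset.univ.filter (· = q)) ∪
          (Finset.univ.filter (· = q) \ Finset.univ.filter (· = p))) = {p, q} := by
        ext r
        simp only [Finset.mem_union, Finset.mem_sdiff, Finset.mem_filter, Finset.mem_univ,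
          true_and, Finset.mem_insert, Finset.mem_singleton]
        constructor
        · rintro (⟨h1, _⟩ | ⟨h1, _⟩)
          · exact Or.inl h1
          · exact Or.inr h1
        · rintro (rfl | rfl)
          · exact Or.inl ⟨rfl, fun h => hpq h⟩
          · exact Or.inr ⟨rfl, fun h => hpq h.symm⟩
      rw [hset]
      rw [Finset.card_pair hpq]
      norm_num
  · -- comb construction
    push_neg at hsmall
    have hn : 18 ≤ n := hsmall
    set NN := (n/4)*(n-2) with hNN
    set w := NN/2 with hw
    set sc := n + NN + 2*w with hsc
    set D := 2*((sc+15)/16) with hD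
    set m := D - 2 with hm
    have hf6 : 4*(n-2) ≤ NN := Nat.mul_le_mul_right _ (by omega)
    have hscb : 33 ≤ sc := by omega
    have h16 : 16*((sc+15)/16) ≤ sc+15 := Nat.mul_div_le _ _
    have h16' : sc ≤ 16*((sc+15)/16) := by omega
    have hD8 : sc ≤ 8*D := by omega
    have hD0 : 0 < D := by omega
    have hcardI : Fintype.card (Fin (n/4) × Fin (n-2)) = NN := by
      simp [Fintype.card_prod, hNN]
    set A := (Finset.univ : Finset ((Fin (n/4) × Fin (n-2)) → Bool)).filter
      (fun b => wt b = w) with hA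
    set V := ∑ j ∈ Finset.range (m+1), NN.choose j with hV
    have hAV : ∀ a ∈ A, (A.filter fun y => hammingDist a y < D).card ≤ V := by
      intro a ha
      have hsub : (A.filter fun y => hammingDist a y < D) ⊆
          Finset.univ.filter (fun y => hammingDist a y ≤ m) := by
        intro y hy
        rw [Finset.mem_filter] at hy ⊢
        obtain ⟨hyA, hylt⟩ := hy
        refine ⟨Finset.mem_univ _, ?_⟩
        have haw : wt a = w := (Finset.mem_filter.mp ha).2
        have hyw : wt y = w := (Finset.mem_filter.mp hyA).2
        obtain ⟨hde, hcle⟩ := dist_eq a y w haw hyw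
        omega
      calc (A.filter fun y => hammingDist a y < D).card
          ≤ (Finset.univ.filter (fun y => hammingDist a y ≤ m)).card :=
            Finset.card_le_card hsub
        _ ≤ ∑ j ∈ Finset.range (m+1), (Fintype.card (Fin (n/4) × Fin (n-2))).choose j :=
            ball_card a m
        _ = V := by rw [hcardI]
    obtain ⟨CC, hCsub, hCpair, hCcard⟩ := greedy D V hD0 A hAV
    set u := (Real.sqrt sc)⁻¹ with hu
    have hsc0 : (0:ℝ) < (sc:ℝ) := by exact_mod_cast (show 0 < sc by omega)
    have hu2 : u^2 = ((sc:ℝ))⁻¹ := by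
      rw [hu, inv_pow, Real.sq_sqrt hsc0.le]
    set f : ((Fin (n/4) × Fin (n-2)) → Bool) → EuclideanSpace ℝ (Fin n × Fin n) :=
      fun b => indic (PC b) u 0 with hf
    -- per-codeword facts
    have hwcode : ∀ b ∈ CC, wt b = w := fun b hb => (Finset.mem_filter.mp (hCsub hb)).2
    have hSScard : ∀ b ∈ CC, (SS b : Finset (Fin n × Fin n)).card = sc := by
      intro b hb
      rw [cardSS hn b, hwcode b hb]
    -- distance fact
    have hdistf : ∀ b ∈ CC, ∀ b' ∈ CC, b ≠ b' → (1/2:ℝ) ≤ ‖f b - f b'‖ := by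
      intro b hb b' hb' hne
      have hdge : D ≤ hammingDist b b' := hCpair b hb b' hb' hne
      obtain ⟨hde, hcle⟩ := dist_eq b b' w (hwcode b hb) (hwcode b' hb')
      have hinter : (SS b ∩ SS b' : Finset (Fin n × Fin n)).card
          = n + NN + 2 * wt (fun v => b v && b' v) := by
        rw [SS_inter hn]
        exact cardSS hn _
      rw [wt_and hn] at hinter
      set c := ((Finset.univ.filter fun v => b v = true) ∩
        (Finset.univ.filter fun v => b' v = true)).card with hc
      have hsd1 := Finset.card_sdiff_add_card_inter (SS b : Finset (Fin n × Fin n)) (SS b')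
      have hsd2 := Finset.card_sdiff_add_card_inter (SS b' : Finset (Fin n × Fin n)) (SS b)
      rw [Finset.inter_comm] at hsd2
      have hdisj : Disjoint (SS b \ SS b' : Finset (Fin n × Fin n)) (SS b' \ SS b) :=
        disjoint_sdiff_sdiff
      have hcardU : ((SS b \ SS b') ∪ (SS b' \ SS b) : Finset (Fin n × Fin n)).card
          = (SS b \ SS b').card + (SS b' \ SS b).card := Finset.card_union_of_disjoint hdisj
      have hUge : sc ≤ 4 * ((SS b \ SS b') ∪ (SS b' \ SS b) : Finset (Fin n × Fin n)).card := by
        have h1 := hSScard b hb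
        have h2 := hSScard b' hb'
        omega
      rw [hf]
      rw [norm_sub_indic]
      apply half_le_sqrt
      rw [show (Finset.univ.filter (PC b)) = SS b from rfl,
        show (Finset.univ.filter (PC b')) = SS b' from rfl]
      rw [hu2]
      have hcast : (sc:ℝ) ≤ 4 * (((SS b \ SS b') ∪ (SS b' \ SS b) :
          Finset (Fin n × Fin n)).card : ℝ) := by exact_mod_cast hUge
      have hfrac : (1/4:ℝ) ≤ (((SS b \ SS b') ∪ (SS b' \ SS b) :
          Finset (Fin n × Fin n)).card : ℝ) / sc := by
        rw [le_div_iff₀ hsc0]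
        linarith
      calc (1/4:ℝ) ≤ _ / (sc:ℝ) := hfrac
        _ = _ * ((sc:ℝ))⁻¹ := div_eq_mul_inv _ _
    -- norms
    have hnorm : ∀ b ∈ CC, ‖f b‖ = 1 := by
      intro b hb
      rw [hf]
      rw [norm_indic]
      rw [show (Finset.univ.filter (PC b)) = SS b from rfl]
      rw [hSScard b hb, hu2]
      rw [mul_inv_cancel₀ (ne_of_gt hsc0)]
      exact Real.sqrt_one
    -- membership in Ktwo
    have hmem : ∀ b : (Fin (n/4) × Fin (n-2)) → Bool, f b ∈ Ktwo n := by
      intro b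
      rw [hf]
      refine indic_mem_Ktwo (PC b) (F 0 0) (F 0 (n-1)) ?_ ?_ ?_ u 0
      · rw [PC_F b 0 0 (by omega) (by omega)]
        exact Or.inl rfl
      · rw [PC_F b 0 (n-1) (by omega) (by omega)]
        exact notPN_j b 0 (n-1) (by omega) (by omega)
      · intro y hy
        exact ⟨fun p hp => Sconst b hy hn p hp, fun p hp => Cconst b hy hn p hp⟩
    -- injectivity on CC
    have hinjCC : Set.InjOn f CC := by
      intro b hb b' hb' he
      by_contra hne
      have := hdistf b hb b' hb' hne
      rw [he, sub_self, norm_zero] at this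
      norm_num at this
    set X := CC.image f with hX
    have hXcard : X.card = CC.card := Finset.card_image_of_injOn hinjCC
    refine ⟨X, ?_, ?_, ?_⟩
    · intro x hx
      simp only [hX, Finset.coe_image, Set.mem_image, Finset.mem_coe] at hx
      obtain ⟨b, hb, rfl⟩ := hx
      exact ⟨hmem b, by rw [mem_sphere_zero_iff_norm]; exact hnorm b hb⟩
    · -- counting
      rw [hXcard]
      have hAcard : A.card = NN.choose w := by
        rw [hA, slice_card, hcardI]
      have hchain : NN.choose w ≤ CC.card * V := by
        rw [← hAcard]; exact hCcard
      have hVpos : 1 ≤ V := by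
        rw [hV]
        calc 1 = NN.choose 0 := (Nat.choose_zero_right NN).symm
          _ ≤ ∑ j ∈ Finset.range (m+1), NN.choose j :=
            Finset.single_le_sum (f := fun j => NN.choose j) (fun _ _ => Nat.zero_le _)
              (Finset.mem_range.mpr (by omega))
      have hnum := numcrit n hn
      have hnum' : 68^(n^2) * V^64 ≤ 25^(n^2) * (NN.choose w)^64 := by
        have hrange : 2*(((n + (n/4)*(n-2) + 2*((n/4)*(n-2)/2)) + 15)/16) - 1 = m + 1 := by
          have h2 : 2 ≤ (sc+15)/16 := by omega
          omega
        rw [hrange] at hnum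
        exact hnum
      have hMpow : 68^(n^2) ≤ 25^(n^2) * CC.card^64 := by
        have step : 68^(n^2) * V^64 ≤ (25^(n^2) * CC.card^64) * V^64 := by
          calc 68^(n^2) * V^64 ≤ 25^(n^2) * (NN.choose w)^64 := hnum'
            _ ≤ 25^(n^2) * (CC.card * V)^64 :=
                Nat.mul_le_mul_left _ (Nat.pow_le_pow_left hchain _)
            _ = (25^(n^2) * CC.card^64) * V^64 := by rw [mul_pow]; ring
        exact Nat.le_of_mul_le_mul_right step (by positivity)
      have hMpos : 0 < CC.card := by
        rcases Nat.eq_zero_or_pos CC.card with h0 | h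
        · exfalso
          rw [h0] at hMpow
          have hpos : (0:ℕ) < 68^(n^2) := by positivity
          have hz : 25^(n^2) * 0^64 = 0 := by norm_num
          rw [hz] at hMpow
          omega
        · exact h
      have hgoal := exp_le_of_pow CC.card (n^2) hMpos hMpow
      have hcast2 : (((n^2:ℕ)):ℝ) = ((n:ℝ))^2 := by push_cast; ring
      rw [hcast2] at hgoal
      exact hgoal
    · intro x hx y hy hxy
      simp only [hX, Finset.mem_image] at hx hy
      obtain ⟨b, hb, rfl⟩ := hx
      obtain ⟨b', hb', rfl⟩ := hy
      exact hdistf b hb b' hb' (fun h => hxy (by rw [h]))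
end

section
/- Let Z be a hypergeometric random variable counting the intersection size of a fixed set of size k with a uniformly random set of size k drawn from {1,...,p} (k ≤ p). Then for all t > 0, P(Z ≥ k²/p + t) ≤ exp(-2t²/(k·(1 - (k-1)/p))). -/
open MeasureTheory Metric Set
open scoped ENNReal NNReal


lemma hoeffB (q u : ℝ) (hq0 : 0 ≤ q) (hq1 : q ≤ 1) :
    q * Real.exp ((1 - q) * u) + (1 - q) * Real.exp (-(q * u)) ≤ Real.exp (u ^ 2 / 8) := by
  set d : ℝ → ℝ := fun v => 1 - q + q * Real.exp v with hd_def
  have hdpos : ∀ v, 0 < d v := by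
    intro v
    rcases eq_or_lt_of_le hq0 with h | h
    · simp [hd_def, ← h]
    · have : 0 < q * Real.exp v := mul_pos h (Real.exp_pos v)
      have h1q : 0 ≤ 1 - q := by linarith
      simp only [hd_def]; linarith
  have hd : ∀ v, HasDerivAt d (q * Real.exp v) v := fun v =>
    (((Real.hasDerivAt_exp v).const_mul q)).const_add (1 - q)
  -- first derivative of ψ
  set ψd : ℝ → ℝ := fun v => q + v / 4 - q * Real.exp v / d v with hψd_def
  have hψdD : ∀ v, HasDerivAt ψd
      (1 / 4 - (q * Real.exp v * d v - q * Real.exp v * (q * Real.exp v)) / (d v) ^ 2) v := by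
    intro v
    have h1 : HasDerivAt (fun v : ℝ => q + v / 4) (1 / 4) v := by
      simpa using ((hasDerivAt_id v).div_const 4).const_add q
    have h2 : HasDerivAt (fun v => q * Real.exp v / d v)
        ((q * Real.exp v * d v - q * Real.exp v * (q * Real.exp v)) / (d v) ^ 2) v :=
      ((Real.hasDerivAt_exp v).const_mul q).div (hd v) (hdpos v).ne'
    have h3 := h1.sub h2
    rw [hψd_def]
    exact h3
  have hψdderiv_nonneg : ∀ v, 0 ≤ deriv ψd v := by
    intro v
    rw [(hψdD v).deriv]
    have he := Real.exp_pos v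
    have hdp := hdpos v
    have hsq : 0 ≤ (1 - q - q * Real.exp v) ^ 2 := sq_nonneg _
    have key : q * Real.exp v * d v - q * Real.exp v * (q * Real.exp v) ≤ (d v) ^ 2 / 4 := by
      simp only [hd_def]
      nlinarith [sq_nonneg (1 - q - q * Real.exp v)]
    have : (q * Real.exp v * d v - q * Real.exp v * (q * Real.exp v)) / (d v) ^ 2 ≤ 1 / 4 := by
      rw [div_le_iff₀ (by positivity)]
      nlinarith
    linarith
  have hψdmono : Monotone ψd :=
    monotone_of_deriv_nonneg (fun v => (hψdD v).differentiableAt) hψdderiv_nonneg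
  have hψd0 : ψd 0 = 0 := by
    simp [hψd_def, hd_def]
  -- ψ itself
  set ψ : ℝ → ℝ := fun v => q * v + v ^ 2 / 8 - Real.log (d v) with hψ_def
  have hψD : ∀ v, HasDerivAt ψ (ψd v) v := by
    intro v
    have h1 : HasDerivAt (fun v : ℝ => q * v + v ^ 2 / 8) (q + v / 4) v := by
      have := ((hasDerivAt_pow 2 v).div_const 8).const_add (q * v)
      have h2 : HasDerivAt (fun x : ℝ => q * x) q v := by
        simpa using (hasDerivAt_id v).const_mul q
      have h3 : HasDerivAt (fun x : ℝ => q * x + x ^ 2 / 8) (q + ((2:ℕ):ℝ) * v ^ (2 - 1) / 8) v :=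
        h2.add ((hasDerivAt_pow 2 v).div_const 8)
      convert h3 using 1
      ring_nf
    have h2 : HasDerivAt (fun v => Real.log (d v)) (q * Real.exp v / d v) v :=
      (hd v).log (hdpos v).ne'
    have h3 := h1.sub h2
    rw [hψ_def, hψd_def]
    exact h3
  have hψdiff : Differentiable ℝ ψ := fun v => (hψD v).differentiableAt
  have hψ0 : ψ 0 = 0 := by simp [hψ_def, hd_def]
  have hψnonneg : ∀ v, 0 ≤ ψ v := by
    intro v
    rcases le_total 0 v with hv | hv
    · have hmono : MonotoneOn ψ (Set.Ici (0 : ℝ)) := by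
        apply monotoneOn_of_deriv_nonneg (convex_Ici 0) hψdiff.continuous.continuousOn
          hψdiff.differentiableOn
        intro x hx
        rw [(hψD x).deriv]
        rw [interior_Ici] at hx
        have := hψdmono (le_of_lt hx)
        rw [hψd0] at this; exact this
      have := hmono (Set.self_mem_Ici) (Set.mem_Ici.2 hv) hv
      rwa [hψ0] at this
    · have hanti : AntitoneOn ψ (Set.Iic (0 : ℝ)) := by
        apply antitoneOn_of_deriv_nonpos (convex_Iic 0) hψdiff.continuous.continuousOn
          hψdiff.differentiableOn
        intro x hx
        rw [(hψD x).deriv]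
        rw [interior_Iic] at hx
        have := hψdmono (le_of_lt hx)
        rw [hψd0] at this; exact this
      have := hanti (Set.mem_Iic.2 hv) (Set.self_mem_Iic) hv
      rwa [hψ0] at this
  -- conclude
  have hlog : Real.log (d u) ≤ q * u + u ^ 2 / 8 := by
    have := hψnonneg u; simp only [hψ_def] at this; linarith
  have hdu : d u ≤ Real.exp (q * u + u ^ 2 / 8) := by
    calc d u = Real.exp (Real.log (d u)) := (Real.exp_log (hdpos u)).symm
    _ ≤ _ := Real.exp_le_exp.2 hlog
  calc q * Real.exp ((1 - q) * u) + (1 - q) * Real.exp (-(q * u))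
      = Real.exp (-(q * u)) * d u := by
        simp only [hd_def]
        rw [show (1 - q) * u = -(q * u) + u by ring, Real.exp_add]
        ring
    _ ≤ Real.exp (-(q * u)) * Real.exp (q * u + u ^ 2 / 8) :=
        mul_le_mul_of_nonneg_left hdu (Real.exp_pos _).le
    _ = Real.exp (u ^ 2 / 8) := by rw [← Real.exp_add]; ring_nf

/-- numerator of the hypergeometric mgf: `∑_j C(L,j) C(M-L, r-j) x^j`. -/
noncomputable def gfun (M L r : ℕ) (x : ℝ) : ℝ :=
  ∑ j ∈ Finset.range (r + 1), (L.choose j : ℝ) * ((M - L).choose (r - j) : ℝ) * x ^ j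

lemma mul_choose (n m : ℕ) (hm : 1 ≤ m) :
    m * n.choose m = n * (n - 1).choose (m - 1) := by
  cases n with
  | zero =>
    have : Nat.choose 0 m = 0 := Nat.choose_eq_zero_of_lt hm
    simp [this]
  | succ a =>
    cases m with
    | zero => omega
    | succ b =>
      simp only [Nat.succ_sub_one]
      rw [mul_comm]
      exact (Nat.add_one_mul_choose_eq a b).symm

lemma grec (M L r : ℕ) (x : ℝ) :
    ((r : ℝ) + 1) * gfun M L (r + 1) x
      = (L : ℝ) * x * gfun (M - 1) (L - 1) r x
        + ((M - L : ℕ) : ℝ) * gfun (M - 1) L r x := by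
  have splitsum :
      ((r : ℝ) + 1) * gfun M L (r + 1) x
        = (∑ j ∈ Finset.range (r + 2),
            (j : ℝ) * ((L.choose j : ℝ) * (((M - L).choose (r + 1 - j) : ℝ)) * x ^ j))
          + ∑ j ∈ Finset.range (r + 2),
            (((r + 1 - j : ℕ) : ℝ) * ((L.choose j : ℝ) * (((M - L).choose (r + 1 - j) : ℝ)) * x ^ j)) := by
    rw [gfun, Finset.mul_sum, ← Finset.sum_add_distrib]
    apply Finset.sum_congr rfl
    intro j hj
    have hjr : j ≤ r + 1 := by
      simpa [Nat.lt_succ_iff] using Finset.mem_range.1 hj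
    have : ((r + 1 - j : ℕ) : ℝ) = (r : ℝ) + 1 - (j : ℝ) := by
      push_cast [Nat.cast_sub hjr]; ring
    rw [this]; ring
  rw [splitsum]
  congr 1
  · -- part A
    rw [Finset.sum_range_succ']
    simp only [Nat.cast_zero, zero_mul, add_zero]
    rcases Nat.eq_zero_or_pos L with hL | hL
    · subst hL
      simp [Nat.choose_eq_zero_of_lt (Nat.succ_pos _)]
    · rw [gfun, Finset.mul_sum]
      apply Finset.sum_congr rfl
      intro i _
      have hch : ((i : ℝ) + 1) * (L.choose (i + 1) : ℝ) = (L : ℝ) * ((L - 1).choose i : ℝ) := by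
        have := mul_choose L (i + 1) (Nat.succ_pos i)
        have h2 : ((i + 1) * L.choose (i + 1) : ℕ) = (L * (L - 1).choose i : ℕ) := by
          simpa using this
        exact_mod_cast congrArg (Nat.cast : ℕ → ℝ) h2
      have hM : M - 1 - (L - 1) = M - L := by omega
      have hr : r + 1 - (i + 1) = r - i := by omega
      rw [hM, hr]
      push_cast only [Nat.cast_add, Nat.cast_one]
      calc ((i : ℝ) + 1) * ((L.choose (i + 1) : ℝ) * ((M - L).choose (r - i) : ℝ) * x ^ (i + 1))
          = (((i : ℝ) + 1) * (L.choose (i + 1) : ℝ)) * (((M - L).choose (r - i) : ℝ) * x ^ (i + 1)) := by ring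
        _ = ((L : ℝ) * ((L - 1).choose i : ℝ)) * (((M - L).choose (r - i) : ℝ) * x ^ (i + 1)) := by rw [hch]
        _ = (L : ℝ) * x * ((L - 1).choose i * ((M - L).choose (r - i) : ℝ) * x ^ i) := by ring
  · -- part B
    rw [Finset.sum_range_succ]
    simp only [Nat.sub_self, Nat.cast_zero, zero_mul, add_zero]
    rw [gfun, Finset.mul_sum]
    apply Finset.sum_congr rfl
    intro j hj
    have hjr : j ≤ r := by simpa [Nat.lt_succ_iff] using Finset.mem_range.1 hj
    have hch : ((r + 1 - j : ℕ) : ℝ) * ((M - L).choose (r + 1 - j) : ℝ)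
        = ((M - L : ℕ) : ℝ) * ((M - L - 1).choose (r - j) : ℝ) := by
      have h1 : 1 ≤ r + 1 - j := by omega
      have := mul_choose (M - L) (r + 1 - j) h1
      have h2 : r + 1 - j - 1 = r - j := by omega
      rw [h2] at this
      exact_mod_cast congrArg (Nat.cast : ℕ → ℝ) this
    have hM : M - 1 - L = M - L - 1 := by omega
    rw [hM]
    calc ((r + 1 - j : ℕ) : ℝ) * ((L.choose j : ℝ) * ((M - L).choose (r + 1 - j) : ℝ) * x ^ j)
        = (((r + 1 - j : ℕ) : ℝ) * ((M - L).choose (r + 1 - j) : ℝ)) * ((L.choose j : ℝ) * x ^ j) := by ring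
      _ = (((M - L : ℕ) : ℝ) * ((M - L - 1).choose (r - j) : ℝ)) * ((L.choose j : ℝ) * x ^ j) := by rw [hch]
      _ = ((M - L : ℕ) : ℝ) * ((L.choose j : ℝ) * ((M - L - 1).choose (r - j) : ℝ) * x ^ j) := by ring

lemma sumlem (m : ℕ) (hm : 1 ≤ m) : ∀ N : ℕ, m ≤ N →
    ∑ i ∈ Finset.Ico m N, (1 : ℝ) / (i : ℝ) ^ 2
      ≤ ((N - m : ℕ) : ℝ) * ((m : ℝ) + 1) / ((m : ℝ) ^ 2 * (N : ℝ)) := by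
  intro N
  induction N with
  | zero => intro h; interval_cases m <;> simp
  | succ N ih =>
    intro hmN
    rcases Nat.lt_or_ge N m with h | h
    · have : m = N + 1 := by omega
      subst this
      simp
    · rw [Finset.sum_Ico_succ_top h]
      have ihh := ih h
      have ha : (1 : ℝ) ≤ (m : ℝ) := by exact_mod_cast hm
      have hb : (m : ℝ) ≤ (N : ℝ) := by exact_mod_cast h
      have hbpos : (0 : ℝ) < (N : ℝ) := by linarith
      have hmpos : (0 : ℝ) < (m : ℝ) := by linarith
      have key : ((N - m : ℕ) : ℝ) * ((m : ℝ) + 1) / ((m : ℝ) ^ 2 * (N : ℝ))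
            + (1 : ℝ) / (N : ℝ) ^ 2
          ≤ ((N + 1 - m : ℕ) : ℝ) * ((m : ℝ) + 1) / ((m : ℝ) ^ 2 * ((N : ℝ) + 1)) := by
        have h1 : ((N - m : ℕ) : ℝ) = (N : ℝ) - (m : ℝ) := by
          push_cast [Nat.cast_sub h]; ring
        have h2 : ((N + 1 - m : ℕ) : ℝ) = (N : ℝ) + 1 - (m : ℝ) := by
          push_cast [Nat.cast_sub (by omega : m ≤ N + 1)]; ring
        rw [h1, h2, div_add_div _ _ (by positivity) (by positivity),
          div_le_div_iff₀ (by positivity) (by positivity)]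
        nlinarith [mul_nonneg (mul_nonneg hmpos.le hbpos.le) (sub_nonneg.2 hb),
          mul_pos hbpos hbpos, sq_nonneg ((N:ℝ) - m)]
      push_cast at key ⊢
      linarith

lemma count_inter {α : Type*} [Fintype α] [DecidableEq α] (r j : ℕ) (F : Finset α)
    (hj : j ≤ r) :
    (((Finset.univ : Finset α).powersetCard r).filter
        (fun S => (F ∩ S).card = j)).card
      = F.card.choose j * (Fintype.card α - F.card).choose (r - j) := by
  have hcard : (F.powersetCard j ×ˢ (Fᶜ).powersetCard (r - j)).card
      = F.card.choose j * (Fintype.card α - F.card).choose (r - j) := by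
    rw [Finset.card_product, Finset.card_powersetCard, Finset.card_powersetCard,
      Finset.card_compl]
  rw [← hcard]
  apply Finset.card_bij' (fun S _ => (F ∩ S, S \ F)) (fun T _ => T.1 ∪ T.2)
  · -- hi
    intro S hS
    rw [Finset.mem_filter] at hS
    obtain ⟨hS1, hS2⟩ := hS
    rw [Finset.mem_powersetCard] at hS1
    rw [Finset.mem_product]
    constructor
    · exact Finset.mem_powersetCard.2 ⟨Finset.inter_subset_left, hS2⟩
    · refine Finset.mem_powersetCard.2 ⟨?_, ?_⟩
      · intro x hx
        rw [Finset.mem_sdiff] at hx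
        exact Finset.mem_compl.2 hx.2
      · show (S \ F).card = r - j
        have := Finset.card_sdiff_add_card_inter S F
        rw [Finset.inter_comm S F] at this
        omega
  · -- hj
    intro T hT
    rw [Finset.mem_product] at hT
    obtain ⟨hT1, hT2⟩ := hT
    rw [Finset.mem_powersetCard] at hT1 hT2
    have hdisj : Disjoint T.1 T.2 := by
      refine Finset.disjoint_left.2 fun x hx1 hx2 => ?_
      exact (Finset.mem_compl.1 (hT2.1 hx2)) (hT1.1 hx1)
    rw [Finset.mem_filter]
    constructor
    · refine Finset.mem_powersetCard.2 ⟨Finset.subset_univ _, ?_⟩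
      rw [Finset.card_union_of_disjoint hdisj, hT1.2, hT2.2]
      omega
    · have : F ∩ (T.1 ∪ T.2) = T.1 := by
        rw [Finset.inter_union_distrib_left]
        have e1 : F ∩ T.1 = T.1 := Finset.inter_eq_right.2 hT1.1
        have e2 : F ∩ T.2 = ∅ := by
          refine Finset.eq_empty_of_forall_notMem fun x hx => ?_
          rw [Finset.mem_inter] at hx
          exact (Finset.mem_compl.1 (hT2.1 hx.2)) hx.1
        rw [e1, e2, Finset.union_empty]
      rw [this, hT1.2]
  · -- left_inv
    intro S _
    ext x
    simp only [Finset.mem_union, Finset.mem_inter, Finset.mem_sdiff]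
    tauto
  · -- right_inv
    intro T hT
    rw [Finset.mem_product] at hT
    obtain ⟨hT1, hT2⟩ := hT
    rw [Finset.mem_powersetCard] at hT1 hT2
    have h1 : ∀ x ∈ T.1, x ∈ F := fun x hx => hT1.1 hx
    have h2 : ∀ x ∈ T.2, x ∉ F := fun x hx => Finset.mem_compl.1 (hT2.1 hx)
    have e1 : F ∩ (T.1 ∪ T.2) = T.1 := by
      ext x
      simp only [Finset.mem_inter, Finset.mem_union]
      constructor
      · rintro ⟨hxF, hx12⟩
        rcases hx12 with h | h
        · exact h
        · exact absurd hxF (h2 x h)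
      · intro h
        exact ⟨h1 x h, Or.inl h⟩
    have e2 : (T.1 ∪ T.2) \ F = T.2 := by
      ext x
      simp only [Finset.mem_sdiff, Finset.mem_union]
      constructor
      · rintro ⟨h | h, hxF⟩
        · exact absurd (h1 x h) hxF
        · exact h
      · intro h
        exact ⟨Or.inr h, h2 x h⟩
    simp [e1, e2]

lemma choose_step (M' r : ℕ) :
    ((M' : ℝ) + 1) * ((M'.choose r : ℕ) : ℝ) = ((r : ℝ) + 1) * (((M' + 1).choose (r + 1) : ℕ) : ℝ) := by
  have h2 : ((M' + 1) * M'.choose r : ℕ) = ((M' + 1).choose (r + 1) * (r + 1) : ℕ) :=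
    Nat.add_one_mul_choose_eq M' r
  have h3 := congrArg (Nat.cast : ℕ → ℝ) h2
  push_cast at h3
  linarith

lemma mgf_bound : ∀ (r M L : ℕ), r < M → L ≤ M → ∀ lam : ℝ,
    gfun M L r (Real.exp (lam / ((M : ℝ) - r)))
      ≤ (M.choose r : ℝ) * Real.exp (lam * r * L / ((M : ℝ) * ((M : ℝ) - r))
          + lam ^ 2 / 8 * ∑ i ∈ Finset.Ico (M - r) M, (1 : ℝ) / (i : ℝ) ^ 2) := by
  intro r
  induction r with
  | zero =>
    intro M L _ _ lam
    simp [gfun]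
  | succ r ih =>
    intro M L hrM hLM lam
    obtain ⟨M', rfl⟩ : ∃ M', M = M' + 1 := ⟨M - 1, by omega⟩
    have hrM' : r < M' := by omega
    have hsR : (0 : ℝ) < (M' : ℝ) - r := by
      have : (r : ℝ) < (M' : ℝ) := by exact_mod_cast hrM'
      linarith
    have hM'pos : (0 : ℝ) < (M' : ℝ) := lt_of_le_of_lt (by positivity : (0:ℝ) ≤ r) (by exact_mod_cast hrM')
    have hMpos : (0 : ℝ) < (M' : ℝ) + 1 := by linarith
    have hcast1 : ((M' + 1 : ℕ) : ℝ) - ((r + 1 : ℕ) : ℝ) = (M' : ℝ) - r := by push_cast; ring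
    rw [show (((M' + 1 : ℕ) : ℝ)) - (((r + 1 : ℕ)) : ℝ) = (M' : ℝ) - r by push_cast; ring]
    set x : ℝ := Real.exp (lam / ((M' : ℝ) - r)) with hx_def
    have hrec := grec (M' + 1) L r x
    simp only [Nat.add_sub_cancel] at hrec
    set V' : ℝ := ∑ i ∈ Finset.Ico (M' - r) M', (1 : ℝ) / (i : ℝ) ^ 2 with hV'_def
    have hVsplit : ∑ i ∈ Finset.Ico (M' + 1 - (r + 1)) (M' + 1), (1 : ℝ) / (i : ℝ) ^ 2
        = V' + 1 / (M' : ℝ) ^ 2 := by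
      rw [show M' + 1 - (r + 1) = M' - r by omega,
        Finset.sum_Ico_succ_top (by omega : M' - r ≤ M')]
    set q : ℝ := (L : ℝ) / ((M' : ℝ) + 1) with hq_def
    set u : ℝ := lam / (M' : ℝ) with hu_def
    set c : ℝ := lam * ((r : ℝ) + 1) * (L : ℝ) / (((M' : ℝ) + 1) * ((M' : ℝ) - r)) with hc_def
    have hxpos : (0 : ℝ) < x := by rw [hx_def]; positivity
    have hq0 : 0 ≤ q := by rw [hq_def]; positivity
    have hq1 : q ≤ 1 := by
      rw [hq_def, div_le_one hMpos]
      have : (L : ℝ) ≤ (M' : ℝ) + 1 := by exact_mod_cast hLM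
      linarith
    have ha0 : lam * r * (L : ℝ) / ((M' : ℝ) * ((M' : ℝ) - r)) = c - q * u := by
      rw [hc_def, hq_def, hu_def]
      field_simp
      ring
    have ha1 : 1 ≤ L → lam / ((M' : ℝ) - r) + lam * r * ((L - 1 : ℕ) : ℝ) / ((M' : ℝ) * ((M' : ℝ) - r))
        = c + (1 - q) * u := by
      intro h
      rw [show ((L - 1 : ℕ) : ℝ) = (L : ℝ) - 1 by push_cast [Nat.cast_sub h]; ring,
        hc_def, hq_def, hu_def]
      field_simp
      ring
    have hML : ((M' + 1 - L : ℕ) : ℝ) = ((M' : ℝ) + 1) * (1 - q) := by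
      have hc2 : ((M' + 1 - L : ℕ) : ℝ) = ((M' : ℝ) + 1) - L := by
        push_cast [Nat.cast_sub hLM]; ring
      rw [hc2, hq_def]
      field_simp
    have hLq : (L : ℝ) = ((M' : ℝ) + 1) * q := by
      rw [hq_def]; field_simp
    clear_value x V' q u c
    -- bound each term of the recursion
    have hbound1 : (L : ℝ) * x * gfun M' (L - 1) r x
        ≤ ((M'.choose r : ℕ) : ℝ) * ((L : ℝ) * Real.exp (c + (1 - q) * u + lam ^ 2 / 8 * V')) := by
      rcases Nat.eq_zero_or_pos L with h | h
      · subst h; simp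
      · have hIH := ih M' (L - 1) hrM' (by omega) lam
        rw [← hx_def, ← hV'_def] at hIH
        have step : (L : ℝ) * x * gfun M' (L - 1) r x
            ≤ (L : ℝ) * x * (((M'.choose r : ℕ) : ℝ)
              * Real.exp (lam * r * ((L - 1 : ℕ) : ℝ) / ((M' : ℝ) * ((M' : ℝ) - r)) + lam ^ 2 / 8 * V')) :=
          mul_le_mul_of_nonneg_left hIH (mul_nonneg (Nat.cast_nonneg L) hxpos.le)
        refine step.trans (le_of_eq ?_)
        have hexp : Real.exp (c + (1 - q) * u + lam ^ 2 / 8 * V')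
            = x * Real.exp (lam * r * ((L - 1 : ℕ) : ℝ) / ((M' : ℝ) * ((M' : ℝ) - r)) + lam ^ 2 / 8 * V') := by
          rw [← ha1 h, hx_def, ← Real.exp_add]
          congr 1
          ring
        rw [hexp]
        ring
    have hbound2 : ((M' + 1 - L : ℕ) : ℝ) * gfun M' L r x
        ≤ ((M'.choose r : ℕ) : ℝ) * (((M' + 1 - L : ℕ) : ℝ) * Real.exp (c - q * u + lam ^ 2 / 8 * V')) := by
      rcases Nat.lt_or_ge L (M' + 1) with h | h
      · have hIH := ih M' L hrM' (by omega) lam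
        rw [← hx_def, ← hV'_def, ha0] at hIH
        have step := mul_le_mul_of_nonneg_left hIH (Nat.cast_nonneg (M' + 1 - L) : (0:ℝ) ≤ _)
        refine step.trans (le_of_eq ?_)
        ring
      · rw [show M' + 1 - L = 0 by omega]
        simp
    -- key convexity step
    have hkey : (L : ℝ) * Real.exp (c + (1 - q) * u + lam ^ 2 / 8 * V')
          + ((M' + 1 - L : ℕ) : ℝ) * Real.exp (c - q * u + lam ^ 2 / 8 * V')
        ≤ ((M' : ℝ) + 1) * Real.exp (c + lam ^ 2 / 8 * V' + u ^ 2 / 8) := by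
      have hhoeff := hoeffB q u hq0 hq1
      calc (L : ℝ) * Real.exp (c + (1 - q) * u + lam ^ 2 / 8 * V')
            + ((M' + 1 - L : ℕ) : ℝ) * Real.exp (c - q * u + lam ^ 2 / 8 * V')
          = ((M' : ℝ) + 1) * Real.exp (c + lam ^ 2 / 8 * V')
              * (q * Real.exp ((1 - q) * u) + (1 - q) * Real.exp (-(q * u))) := by
            rw [hML, hLq,
              show c + (1 - q) * u + lam ^ 2 / 8 * V' = (c + lam ^ 2 / 8 * V') + (1 - q) * u by ring,
              show c - q * u + lam ^ 2 / 8 * V' = (c + lam ^ 2 / 8 * V') + -(q * u) by ring,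
              Real.exp_add]
            simp only [Real.exp_add]
            ring
        _ ≤ ((M' : ℝ) + 1) * Real.exp (c + lam ^ 2 / 8 * V') * Real.exp (u ^ 2 / 8) :=
            mul_le_mul_of_nonneg_left hhoeff (by positivity)
        _ = _ := by rw [mul_assoc, ← Real.exp_add]
    -- put everything together
    have hmain : ((r : ℝ) + 1) * gfun (M' + 1) L (r + 1) x
        ≤ ((r : ℝ) + 1) * ((((M' + 1).choose (r + 1) : ℕ) : ℝ)
            * Real.exp (c + lam ^ 2 / 8 * V' + u ^ 2 / 8)) := by
      rw [hrec]
      calc (L : ℝ) * x * gfun M' (L - 1) r x + ((M' + 1 - L : ℕ) : ℝ) * gfun M' L r x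
          ≤ ((M'.choose r : ℕ) : ℝ) * ((L : ℝ) * Real.exp (c + (1 - q) * u + lam ^ 2 / 8 * V'))
            + ((M'.choose r : ℕ) : ℝ) * (((M' + 1 - L : ℕ) : ℝ) * Real.exp (c - q * u + lam ^ 2 / 8 * V')) :=
            add_le_add hbound1 hbound2
        _ = ((M'.choose r : ℕ) : ℝ) * ((L : ℝ) * Real.exp (c + (1 - q) * u + lam ^ 2 / 8 * V')
            + ((M' + 1 - L : ℕ) : ℝ) * Real.exp (c - q * u + lam ^ 2 / 8 * V')) := by ring
        _ ≤ ((M'.choose r : ℕ) : ℝ) * (((M' : ℝ) + 1) * Real.exp (c + lam ^ 2 / 8 * V' + u ^ 2 / 8)) :=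
            mul_le_mul_of_nonneg_left hkey (Nat.cast_nonneg _)
        _ = (((M' : ℝ) + 1) * ((M'.choose r : ℕ) : ℝ)) * Real.exp (c + lam ^ 2 / 8 * V' + u ^ 2 / 8) := by
            ring
        _ = _ := by rw [choose_step]; ring
    have hfin : gfun (M' + 1) L (r + 1) x
        ≤ (((M' + 1).choose (r + 1) : ℕ) : ℝ) * Real.exp (c + lam ^ 2 / 8 * V' + u ^ 2 / 8) :=
      le_of_mul_le_mul_left hmain (by positivity : (0 : ℝ) < (r : ℝ) + 1)
    refine hfin.trans (le_of_eq ?_)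
    congr 1
    rw [hVsplit, hc_def, hu_def,
      show ((M' + 1 : ℕ) : ℝ) = (M' : ℝ) + 1 by push_cast; ring,
      show ((r + 1 : ℕ) : ℝ) = (r : ℝ) + 1 by push_cast; ring]
    field_simp
    ring

lemma sum_powersetCard (p r : ℕ) (F : Finset (Fin p)) (x : ℝ) :
    ∑ S ∈ (Finset.univ : Finset (Fin p)).powersetCard r, x ^ (F ∩ S).card
      = gfun p F.card r x := by
  rw [gfun, ← Finset.sum_fiberwise_of_maps_to (g := fun S => (F ∩ S).card)
    (t := Finset.range (r + 1)) (fun S hS => ?_)]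
  · apply Finset.sum_congr rfl
    intro j hj
    have hj' : j ≤ r := by
      have := Finset.mem_range.1 hj; omega
    have : ∑ S ∈ ((Finset.univ : Finset (Fin p)).powersetCard r).filter
        (fun S => (F ∩ S).card = j), x ^ (F ∩ S).card
        = ∑ _S ∈ ((Finset.univ : Finset (Fin p)).powersetCard r).filter
          (fun S => (F ∩ S).card = j), x ^ j := by
      apply Finset.sum_congr rfl
      intro S hS
      rw [(Finset.mem_filter.1 hS).2]
    rw [this, Finset.sum_const, count_inter r j F hj', nsmul_eq_mul]
    push_cast [Fintype.card_fin]
    ring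
  · rw [Finset.mem_range, Nat.lt_succ_iff]
    have hS' := (Finset.mem_powersetCard.1 hS).2
    calc (F ∩ S).card ≤ S.card := Finset.card_le_card Finset.inter_subset_right
      _ = r := hS'

lemma main_count (p k : ℕ) (hk : 1 ≤ k) (hkp : k < p)
    (F : Finset (Fin p)) (hF : F.card = k) (t : ℝ) (ht : 0 < t) :
    ((((Finset.univ : Finset (Fin p)).powersetCard k).filter
        (fun S => ((k : ℝ) ^ 2 / p + t) ≤ ((F ∩ S).card : ℝ))).card : ℝ)
      ≤ (p.choose k : ℝ) * Real.exp (-(2 * t ^ 2) / ((k : ℝ) * (1 - ((k : ℝ) - 1) / p))) := by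
  have hppos : (0 : ℝ) < p := by exact_mod_cast (by omega : 0 < p)
  have hkR : (0 : ℝ) < k := by exact_mod_cast hk
  have hs : (0 : ℝ) < (p : ℝ) - k := by
    have : (k : ℝ) < p := by exact_mod_cast hkp
    linarith
  set V : ℝ := ∑ i ∈ Finset.Ico (p - k) p, (1 : ℝ) / (i : ℝ) ^ 2 with hV_def
  have hVpos : 0 < V := by
    rw [hV_def]
    apply Finset.sum_pos
    · intro i hi
      have hi1 : 1 ≤ i := by
        have := (Finset.mem_Ico.1 hi).1; omega
      have : (0 : ℝ) < i := by exact_mod_cast hi1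
      positivity
    · refine ⟨p - k, Finset.mem_Ico.2 ⟨le_refl _, by omega⟩⟩
  set lam : ℝ := 4 * t / (((p : ℝ) - k) * V) with hlam_def
  have hlampos : 0 < lam := by rw [hlam_def]; positivity
  set a : ℝ := (k : ℝ) ^ 2 / p + t with ha_def
  -- Markov / Chernoff counting step
  set x : ℝ := Real.exp (lam / ((p : ℝ) - k)) with hx_def
  clear_value V lam a x
  have step1 : ((((Finset.univ : Finset (Fin p)).powersetCard k).filter
        (fun S => a ≤ ((F ∩ S).card : ℝ))).card : ℝ)
      ≤ Real.exp (-(lam * a / ((p : ℝ) - k))) * gfun p k k x := by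
    have hgf : gfun p k k x
        = ∑ S ∈ (Finset.univ : Finset (Fin p)).powersetCard k, x ^ (F ∩ S).card := by
      rw [sum_powersetCard, hF]
    rw [hgf, Finset.mul_sum]
    calc ((((Finset.univ : Finset (Fin p)).powersetCard k).filter
          (fun S => a ≤ ((F ∩ S).card : ℝ))).card : ℝ)
        = ∑ _S ∈ (((Finset.univ : Finset (Fin p)).powersetCard k).filter
            (fun S => a ≤ ((F ∩ S).card : ℝ))), (1 : ℝ) := by
          rw [Finset.sum_const, nsmul_eq_mul, mul_one]
      _ ≤ ∑ S ∈ (((Finset.univ : Finset (Fin p)).powersetCard k).filter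
            (fun S => a ≤ ((F ∩ S).card : ℝ))),
            Real.exp (-(lam * a / ((p : ℝ) - k))) * x ^ (F ∩ S).card := by
          apply Finset.sum_le_sum
          intro S hS
          have hSa := (Finset.mem_filter.1 hS).2
          rw [hx_def, ← Real.exp_nat_mul, ← Real.exp_add]
          rw [show (1 : ℝ) = Real.exp 0 by rw [Real.exp_zero]]
          apply Real.exp_le_exp.2
          rw [show -(lam * a / ((p : ℝ) - k)) + ((F ∩ S).card : ℝ) * (lam / ((p : ℝ) - k))
              = lam / ((p : ℝ) - k) * (((F ∩ S).card : ℝ) - a) by field_simp; ring]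
          have h1 : 0 < lam / ((p : ℝ) - k) := by positivity
          exact mul_nonneg h1.le (by linarith)
      _ ≤ _ := by
          apply Finset.sum_le_sum_of_subset_of_nonneg (Finset.filter_subset _ _)
          intro S _ _
          have : 0 < x := by rw [hx_def]; positivity
          positivity
  -- apply the mgf bound
  have step2 := mgf_bound k p k hkp (le_of_lt hkp) lam
  rw [← hx_def, ← hV_def] at step2
  have step3 : ((((Finset.univ : Finset (Fin p)).powersetCard k).filter
        (fun S => a ≤ ((F ∩ S).card : ℝ))).card : ℝ)
      ≤ (p.choose k : ℝ) * Real.exp (-(lam * t / ((p : ℝ) - k)) + lam ^ 2 / 8 * V) := by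
    calc ((((Finset.univ : Finset (Fin p)).powersetCard k).filter
          (fun S => a ≤ ((F ∩ S).card : ℝ))).card : ℝ)
        ≤ Real.exp (-(lam * a / ((p : ℝ) - k))) * gfun p k k x := step1
      _ ≤ Real.exp (-(lam * a / ((p : ℝ) - k))) * ((p.choose k : ℝ)
            * Real.exp (lam * k * k / ((p : ℝ) * ((p : ℝ) - k)) + lam ^ 2 / 8 * V)) :=
          mul_le_mul_of_nonneg_left step2 (Real.exp_pos _).le
      _ = (p.choose k : ℝ) * Real.exp (-(lam * a / ((p : ℝ) - k))
            + (lam * k * k / ((p : ℝ) * ((p : ℝ) - k)) + lam ^ 2 / 8 * V)) := by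
          simp only [Real.exp_add]; ring
      _ = _ := by
          congr 2
          rw [ha_def]
          field_simp
          ring
  refine step3.trans ?_
  apply mul_le_mul_of_nonneg_left _ (Nat.cast_nonneg _)
  apply Real.exp_le_exp.2
  -- exponent computation and comparison
  have hexp_eq : -(lam * t / ((p : ℝ) - k)) + lam ^ 2 / 8 * V
      = -(2 * t ^ 2) / ((((p : ℝ) - k) ^ 2) * V) := by
    rw [hlam_def]
    field_simp
    ring
  rw [hexp_eq]
  -- denominators
  have hsum := sumlem (p - k) (by omega) p (by omega)
  have hc1 : ((p - (p - k) : ℕ) : ℝ) = (k : ℝ) := by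
    push_cast [Nat.cast_sub (by omega : p - k ≤ p)]
    push_cast [Nat.cast_sub (le_of_lt hkp)]
    ring
  have hc2 : ((p - k : ℕ) : ℝ) = (p : ℝ) - k := by
    push_cast [Nat.cast_sub (le_of_lt hkp)]; ring
  rw [hc1, hc2, ← hV_def] at hsum
  have hD_eq : (k : ℝ) * (1 - ((k : ℝ) - 1) / p) = (k : ℝ) * (((p : ℝ) - k) + 1) / p := by
    field_simp
    try ring
    try exact Or.inl trivial
  have hDpos : 0 < (k : ℝ) * (((p : ℝ) - k) + 1) / p := by positivity
  have hbound : (((p : ℝ) - k) ^ 2) * V ≤ (k : ℝ) * (((p : ℝ) - k) + 1) / p := by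
    calc (((p : ℝ) - k) ^ 2) * V ≤ (((p : ℝ) - k) ^ 2) * ((k : ℝ) * (((p : ℝ) - k) + 1)
          / (((p : ℝ) - k) ^ 2 * p)) := mul_le_mul_of_nonneg_left hsum (by positivity)
      _ = (k : ℝ) * (((p : ℝ) - k) + 1) / p := by field_simp
  rw [hD_eq]
  rw [neg_div, neg_div, neg_le_neg_iff]
  apply div_le_div_of_nonneg_left (by positivity) (by positivity) hbound

instance (p : ℕ) : MeasurableSpace (Finset (Fin p)) := ⊤

/-- Serfling's inequality for hypergeometric sampling: if `Z` is the size of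
the intersection of a fixed `k`-set `F ⊆ {1,…,p}` with a uniformly random `k`-set, then
`P(Z ≥ k²/p + t) ≤ exp(-2t²/(k(1-(k-1)/p)))` for all `t > 0`. -/
theorem stmt15 (p k : ℕ) (hp : 0 < p) (hkp : k ≤ p)
    (F : Finset (Fin p)) (hF : F.card = k)
    (hne : ((Finset.univ : Finset (Fin p)).powersetCard k).Nonempty)
    (t : ℝ) (ht : 0 < t) :
    (PMF.uniformOfFinset _ hne).toMeasure
      {S : Finset (Fin p) | ((k : ℝ) ^ 2 / p + t) ≤ ((F ∩ S).card : ℝ)}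
      ≤ ENNReal.ofReal
          (Real.exp (-(2 * t ^ 2) / ((k : ℝ) * (1 - ((k : ℝ) - 1) / p)))) := by
  classical
  have hppos : (0 : ℝ) < p := by exact_mod_cast hp
  rcases Nat.eq_zero_or_pos k with hk0 | hk1
  · subst hk0
    simp only [Nat.cast_zero, zero_mul, div_zero, Real.exp_zero, ENNReal.ofReal_one]
    exact (measure_mono (Set.subset_univ _)).trans (le_of_eq measure_univ)
  rcases eq_or_lt_of_le hkp with hkeq | hklt
  · have hkR : ((k : ℕ) : ℝ) = (p : ℝ) := by exact_mod_cast congrArg (Nat.cast : ℕ → ℝ) hkeq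
    have hempty : {S : Finset (Fin p) | ((k : ℝ) ^ 2 / p + t) ≤ ((F ∩ S).card : ℝ)}
        = (∅ : Set (Finset (Fin p))) := by
      ext S
      simp only [Set.mem_setOf_eq, Set.mem_empty_iff_false, iff_false, not_le]
      have h1 : (F ∩ S).card ≤ k := by
        rw [← hF]; exact Finset.card_le_card Finset.inter_subset_left
      have h1' : ((F ∩ S).card : ℝ) ≤ (k : ℝ) := by exact_mod_cast h1
      have h2 : (k : ℝ) ^ 2 / p = (k : ℝ) := by
        rw [hkR]; field_simp
      linarith
    rw [hempty]
    simp
  · have hmeas : MeasurableSet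
        {S : Finset (Fin p) | ((k : ℝ) ^ 2 / p + t) ≤ ((F ∩ S).card : ℝ)} := trivial
    rw [PMF.toMeasure_uniformOfFinset_apply hne _ hmeas]
    simp only [Set.mem_setOf_eq]
    have hcard : ((Finset.univ : Finset (Fin p)).powersetCard k).card = p.choose k := by
      rw [Finset.card_powersetCard, Finset.card_univ, Fintype.card_fin]
    rw [hcard]
    have hCne : ((p.choose k : ℕ) : ℝ≥0∞) ≠ 0 := by
      simp [(Nat.choose_pos (le_of_lt hklt)).ne']
    rw [ENNReal.div_le_iff_le_mul (Or.inl hCne) (Or.inl (ENNReal.natCast_ne_top _))]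
    have hcount := main_count p k hk1 hklt F hF t ht
    calc ((((Finset.univ : Finset (Fin p)).powersetCard k).filter
          (fun S => ((k : ℝ) ^ 2 / p + t) ≤ ((F ∩ S).card : ℝ))).card : ℝ≥0∞)
        = ENNReal.ofReal ((((Finset.univ : Finset (Fin p)).powersetCard k).filter
          (fun S => ((k : ℝ) ^ 2 / p + t) ≤ ((F ∩ S).card : ℝ))).card : ℝ) := by
          rw [ENNReal.ofReal_natCast]
      _ ≤ ENNReal.ofReal (Real.exp (-(2 * t ^ 2) / ((k : ℝ) * (1 - ((k : ℝ) - 1) / p)))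
            * (p.choose k : ℝ)) := by
          apply ENNReal.ofReal_le_ofReal
          calc _ ≤ _ := hcount
            _ = _ := by ring
      _ = ENNReal.ofReal (Real.exp (-(2 * t ^ 2) / ((k : ℝ) * (1 - ((k : ℝ) - 1) / p))))
            * ((p.choose k : ℕ) : ℝ≥0∞) := by
          rw [ENNReal.ofReal_mul (Real.exp_pos _).le, ENNReal.ofReal_natCast]
end
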